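/- arXiv:2106.15291 — 9 statements merged into one kernel-verified Lean document; each statement's English description precedes it below -/
import Mathlib

section
/- Fix r₀ > 0, k ∈ ℤ, and set σ = sign(k) (with σ = 0 when k = 0). Let w_k : [r₀,∞) → ℂ be continuous with ∫_{r₀}^∞ s|w_k(s)| ds < ∞, and let v∞r, v∞φ ∈ ℂ satisfy either (|k| = 1 and v∞φ = i k v∞r) or (v∞r = v∞φ = 0). Define for r ≥ r₀: v_r(r) = σ (i r^{-|k|-1}/2) ∫_{r₀}^r s^{|k|+1} w_k(s) ds + σ (i r^{|k|-1}/2) ∫_r^∞ s^{-|k|+1} w_k(s) ds + v∞r and v_φ(r) = (r^{-|k|-1}/2) ∫_{r₀}^r s^{|k|+1} w_k(s) ds − (r^{|k|-1}/2) ∫_r^∞ s^{-|k|+1} w_k(s) ds + v∞φ. Then for every r > r₀ one has d/dr ( r·v_r(r) ) + i k v_φ(r) = 0 and d/dr ( r·v_φ(r) ) − i k v_r(r) = r·w_k(r). -/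
open MeasureTheory Set Complex Filter Topology

/-- Biot–Savart law in the exterior of the disc, Fourier-mode form.
For `r₀ > 0`, `k ∈ ℤ`, `σ = sign k`, a continuous vorticity coefficient `w` on `[r₀,∞)`
with `∫ s|w(s)| ds < ∞`, and constants `vIr, vIφ` (nonzero only for `|k| = 1`, where
`vIφ = i k vIr`), the velocity coefficients `v_r, v_φ` defined by the Biot–Savart
formulas satisfy, for every `r > r₀`,
`d/dr (r v_r(r)) + i k v_φ(r) = 0` and `d/dr (r v_φ(r)) − i k v_r(r) = r w(r)`. -/
theorem stmt0 (r₀ : ℝ) (hr₀ : 0 < r₀) (k : ℤ) (w : ℝ → ℂ)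
    (hw_cont : ContinuousOn w (Set.Ici r₀))
    (hw_int : IntegrableOn (fun s : ℝ => s * ‖w s‖) (Set.Ioi r₀))
    (vIr vIφ : ℂ)
    (hvI : (|k| = 1 ∧ vIφ = Complex.I * (k : ℂ) * vIr) ∨ (vIr = 0 ∧ vIφ = 0))
    (vr vφ : ℝ → ℂ)
    (hvr : ∀ r ≥ r₀, vr r =
      (Int.sign k : ℂ) * (Complex.I * (r : ℂ) ^ (-(|k| : ℤ) - 1) / 2) *
        (∫ s in Set.Ioc r₀ r, (s : ℂ) ^ ((|k| : ℤ) + 1) * w s)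
      + (Int.sign k : ℂ) * (Complex.I * (r : ℂ) ^ ((|k| : ℤ) - 1) / 2) *
        (∫ s in Set.Ioi r, (s : ℂ) ^ (-(|k| : ℤ) + 1) * w s)
      + vIr)
    (hvφ : ∀ r ≥ r₀, vφ r =
      ((r : ℂ) ^ (-(|k| : ℤ) - 1) / 2) *
        (∫ s in Set.Ioc r₀ r, (s : ℂ) ^ ((|k| : ℤ) + 1) * w s)
      - ((r : ℂ) ^ ((|k| : ℤ) - 1) / 2) *
        (∫ s in Set.Ioi r, (s : ℂ) ^ (-(|k| : ℤ) + 1) * w s)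
      + vIφ) :
    ∀ r > r₀,
      HasDerivAt (fun ρ : ℝ => (ρ : ℂ) * vr ρ) (-(Complex.I * (k : ℂ) * vφ r)) r ∧
      HasDerivAt (fun ρ : ℝ => (ρ : ℂ) * vφ ρ)
        (Complex.I * (k : ℂ) * vr r + (r : ℂ) * w r) r := by
  intro r hr
  set n : ℤ := |k| with hn
  have hn0 : 0 ≤ n := abs_nonneg k
  have hr0 : (0:ℝ) < r := hr₀.trans hr
  have hrc : (r:ℂ) ≠ 0 := by exact_mod_cast hr0.ne'
  set g1 : ℝ → ℂ := fun s => (s:ℂ) ^ (n + 1) * w s with hg1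
  set g2 : ℝ → ℂ := fun s => (s:ℂ) ^ (-n + 1) * w s with hg2
  have hzero : ∀ s ∈ Ici r₀, (s:ℂ) ≠ 0 := by
    intro s hs
    exact_mod_cast (hr₀.trans_le hs).ne'
  have hg1c : ContinuousOn g1 (Ici r₀) :=
    ((Complex.continuous_ofReal.continuousOn).zpow₀ (n+1)
      (fun s hs => Or.inl (hzero s hs))).mul hw_cont
  have hg2c : ContinuousOn g2 (Ici r₀) :=
    ((Complex.continuous_ofReal.continuousOn).zpow₀ (-n+1)
      (fun s hs => Or.inl (hzero s hs))).mul hw_cont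
  -- integrability of g2 on Ioi r₀
  have hg2int : IntegrableOn g2 (Ioi r₀) := by
    have hmeas : AEStronglyMeasurable g2 (volume.restrict (Ioi r₀)) :=
      (hg2c.mono Ioi_subset_Ici_self).aestronglyMeasurable measurableSet_Ioi
    refine Integrable.mono' (hw_int.const_mul (r₀ ^ (-n))) hmeas ?_
    filter_upwards [ae_restrict_mem measurableSet_Ioi] with s hs
    have hs0 : 0 < s := hr₀.trans hs
    have h1 : ‖g2 s‖ = s ^ (-n + 1) * ‖w s‖ := by
      rw [hg2]; simp [norm_zpow, abs_of_pos hs0]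
    rw [h1]
    have h2 : s ^ (-n) ≤ r₀ ^ (-n) := by
      rw [zpow_neg, zpow_neg]
      refine inv_anti₀ (zpow_pos hr₀ n) ?_
      lift n to ℕ using hn0 with N
      simpa [zpow_natCast] using pow_le_pow_left₀ hr₀.le hs.le N
    have h3 : s ^ (-n + 1) = s ^ (-n) * s := by
      rw [zpow_add₀ hs0.ne', zpow_one]
    rw [h3]
    calc s ^ (-n) * s * ‖w s‖ ≤ r₀ ^ (-n) * s * ‖w s‖ :=
          mul_le_mul_of_nonneg_right (mul_le_mul_of_nonneg_right h2 hs0.le)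
            (norm_nonneg (w s))
      _ = r₀ ^ (-n) * (s * ‖w s‖) := by ring
  -- splitting of the integral
  set CB : ℂ := ∫ s in Ioi r₀, g2 s with hCB
  have hsplit : ∀ a, r₀ ≤ a → ∫ s in Ioi a, g2 s
      = CB - ∫ s in Ioc r₀ a, g2 s := by
    intro a ha
    have h := setIntegral_union (Set.Ioc_disjoint_Ioi le_rfl) measurableSet_Ioi
      (hg2int.mono_set Set.Ioc_subset_Ioi_self) (hg2int.mono_set (Ioi_subset_Ioi ha)) (f := g2)
    rw [Set.Ioc_union_Ioi_eq_Ioi ha] at h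
    rw [hCB, h]; ring
  -- FTC
  have hFTC : ∀ (g : ℝ → ℂ), ContinuousOn g (Ici r₀) →
      HasDerivAt (fun ρ : ℝ => ∫ s in Ioc r₀ ρ, g s) (g r) r := by
    intro g hgc
    have hmeas : StronglyMeasurableAtFilter g (𝓝 r) volume :=
      (hgc.mono Ioi_subset_Ici_self).stronglyMeasurableAtFilter isOpen_Ioi r hr
    have hca : ContinuousAt g r := hgc.continuousAt (Ici_mem_nhds hr)
    have hint : IntervalIntegrable g volume r₀ r := by
      apply ContinuousOn.intervalIntegrable
      apply hgc.mono
      rw [uIcc_of_le hr.le]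
      exact Icc_subset_Ici_self
    refine (intervalIntegral.integral_hasDerivAt_right hint hmeas hca).congr_of_eventuallyEq ?_
    filter_upwards [Ioi_mem_nhds hr] with ρ hρ
    rw [intervalIntegral.integral_of_le (le_of_lt hρ)]
  have hA1 : HasDerivAt (fun ρ : ℝ => ∫ s in Ioc r₀ ρ, g1 s) (g1 r) r := hFTC g1 hg1c
  have hA2 : HasDerivAt (fun ρ : ℝ => ∫ s in Ioc r₀ ρ, g2 s) (g2 r) r := hFTC g2 hg2c
  set A : ℝ → ℂ := fun ρ => ∫ s in Ioc r₀ ρ, g1 s with hA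
  set A2 : ℝ → ℂ := fun ρ => ∫ s in Ioc r₀ ρ, g2 s with hA2def
  set σ : ℂ := (Int.sign k : ℂ) with hσ
  -- zpow derivative
  have hzp : ∀ m : ℤ, HasDerivAt (fun ρ : ℝ => (ρ:ℂ) ^ m) ((m:ℂ) * (r:ℂ) ^ (m - 1)) r :=
    fun m => (hasDerivAt_zpow m (r:ℂ) (Or.inl hrc)).comp_ofReal
  have hid : HasDerivAt (fun ρ : ℝ => (ρ:ℂ)) 1 r := (hasDerivAt_id (r:ℂ)).comp_ofReal
  -- power rewrites
  have hpow : ∀ t : ℂ, t ≠ 0 →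
      (t ^ (-n) = t * t ^ (-n - 1) ∧ t ^ n = t * t ^ (n - 1) ∧
       t ^ (n + 1) = (t * t) * t ^ (n - 1) ∧ t ^ (-n + 1) = (t * t) * t ^ (-n - 1) ∧
       t ^ (-n - 1) * t ^ (n - 1) * (t * t) = 1) := by
    intro t ht
    have h2t : t ^ (2:ℤ) = t * t := by
      rw [show (2:ℤ) = 1 + 1 by norm_num, zpow_add₀ ht, zpow_one]
    refine ⟨?_, ?_, ?_, ?_, ?_⟩
    · have h := zpow_add₀ ht 1 (-n - 1)
      rw [show (1 : ℤ) + (-n - 1) = -n by ring, zpow_one] at h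
      exact h
    · have h := zpow_add₀ ht 1 (n - 1)
      rw [show (1 : ℤ) + (n - 1) = n by ring, zpow_one] at h
      exact h
    · have h := zpow_add₀ ht 2 (n - 1)
      rw [show (2 : ℤ) + (n - 1) = n + 1 by ring, h2t] at h
      exact h
    · have h := zpow_add₀ ht 2 (-n - 1)
      rw [show (2 : ℤ) + (-n - 1) = -n + 1 by ring, h2t] at h
      exact h
    · have h := (zpow_add₀ ht (-n - 1) (n - 1)).symm
      rw [show (-n - 1) + (n - 1) = -(2:ℤ) by ring] at h
      rw [h, zpow_neg, h2t]
      exact inv_mul_cancel₀ (mul_ne_zero ht ht)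
  -- sign relations
  have hkc : σ * (n:ℂ) = (k:ℂ) := by
    rw [hσ, hn]
    exact_mod_cast congrArg (Int.cast : ℤ → ℂ) (Int.sign_mul_abs k)
  have hkσ : (k:ℂ) * σ = (n:ℂ) := by
    rw [hσ, hn]
    have h := Int.mul_sign_self k
    have h2 : k * Int.sign k = |k| := by rw [h, Int.abs_eq_natAbs]
    exact_mod_cast congrArg (Int.cast : ℤ → ℂ) h2
  have hc1 : vIr = -(Complex.I * (k:ℂ) * vIφ) := by
    rcases hvI with ⟨hk1, hφ⟩ | ⟨h1, h2⟩
    · have hk1' : |k| = 1 := by rw [← hn]; exact hk1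
      have hk2 : (k:ℂ) ^ 2 = 1 := by
        have h3 : k ^ 2 = 1 := by rw [← _root_.sq_abs, hk1', one_pow]
        exact_mod_cast congrArg (Int.cast : ℤ → ℂ) h3
      rw [hφ]
      have hI := Complex.I_sq
      linear_combination ((k:ℂ)^2 * vIr) * hI + (-vIr) * hk2
    · rw [h1, h2]; ring
  have hc2 : vIφ = Complex.I * (k:ℂ) * vIr := by
    rcases hvI with ⟨_, hφ⟩ | ⟨h1, h2⟩
    · exact hφ
    · rw [h1, h2]; ring
  have hIn : Complex.I * Complex.I * ((k:ℂ) * σ) = -(n:ℂ) := by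
    rw [Complex.I_mul_I, hkσ]; ring
  -- derivative of explicit formulas
  have h1 : HasDerivAt (fun ρ : ℝ =>
      σ * Complex.I / 2 * ((ρ:ℂ) ^ (-n) * A ρ)
      + σ * Complex.I / 2 * ((ρ:ℂ) ^ n * (CB - A2 ρ))
      + (ρ:ℂ) * vIr)
      (σ * Complex.I / 2 * (((-n:ℂ) * (r:ℂ) ^ (-n - 1)) * A r + (r:ℂ) ^ (-n) * g1 r)
      + σ * Complex.I / 2 * (((n:ℂ) * (r:ℂ) ^ (n - 1)) * (CB - A2 r) + (r:ℂ) ^ n * (0 - g2 r))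
      + 1 * vIr) r := by
    have d1 := ((hzp (-n)).mul hA1).const_mul (σ * Complex.I / 2)
    have d2 := (((hzp n).mul ((hasDerivAt_const r CB).sub hA2)).const_mul (σ * Complex.I / 2))
    have d3 := hid.mul_const vIr
    convert (d1.add d2).add d3 using 1
    all_goals push_cast; rfl
  have h2 : HasDerivAt (fun ρ : ℝ =>
      (1/2 : ℂ) * ((ρ:ℂ) ^ (-n) * A ρ)
      - (1/2 : ℂ) * ((ρ:ℂ) ^ n * (CB - A2 ρ))
      + (ρ:ℂ) * vIφ)
      ((1/2 : ℂ) * (((-n:ℂ) * (r:ℂ) ^ (-n - 1)) * A r + (r:ℂ) ^ (-n) * g1 r)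
      - (1/2 : ℂ) * (((n:ℂ) * (r:ℂ) ^ (n - 1)) * (CB - A2 r) + (r:ℂ) ^ n * (0 - g2 r))
      + 1 * vIφ) r := by
    have d1 := ((hzp (-n)).mul hA1).const_mul (1/2 : ℂ)
    have d2 := (((hzp n).mul ((hasDerivAt_const r CB).sub hA2)).const_mul (1/2 : ℂ))
    have d3 := hid.mul_const vIφ
    convert (d1.sub d2).add d3 using 1
    all_goals push_cast; rfl
  -- eventual equalities
  have hev1 : (fun ρ : ℝ => (ρ:ℂ) * vr ρ) =ᶠ[𝓝 r] (fun ρ : ℝ =>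
      σ * Complex.I / 2 * ((ρ:ℂ) ^ (-n) * A ρ)
      + σ * Complex.I / 2 * ((ρ:ℂ) ^ n * (CB - A2 ρ))
      + (ρ:ℂ) * vIr) := by
    filter_upwards [Ioi_mem_nhds hr] with ρ hρ
    have hρ0 : (0:ℝ) < ρ := hr₀.trans hρ
    have hρc : (ρ:ℂ) ≠ 0 := by exact_mod_cast hρ0.ne'
    obtain ⟨e1, e2, _, _, _⟩ := hpow (ρ:ℂ) hρc
    rw [hvr ρ (le_of_lt hρ), hsplit ρ (le_of_lt hρ)]
    rw [e1, e2]
    ring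
  have hev2 : (fun ρ : ℝ => (ρ:ℂ) * vφ ρ) =ᶠ[𝓝 r] (fun ρ : ℝ =>
      (1/2 : ℂ) * ((ρ:ℂ) ^ (-n) * A ρ)
      - (1/2 : ℂ) * ((ρ:ℂ) ^ n * (CB - A2 ρ))
      + (ρ:ℂ) * vIφ) := by
    filter_upwards [Ioi_mem_nhds hr] with ρ hρ
    have hρ0 : (0:ℝ) < ρ := hr₀.trans hρ
    have hρc : (ρ:ℂ) ≠ 0 := by exact_mod_cast hρ0.ne'
    obtain ⟨e1, e2, _, _, _⟩ := hpow (ρ:ℂ) hρc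
    rw [hvφ ρ (le_of_lt hρ), hsplit ρ (le_of_lt hρ)]
    rw [e1, e2]
    ring
  obtain ⟨e1, e2, e3, e4, e5⟩ := hpow (r:ℂ) hrc
  constructor
  · refine (h1.congr_of_eventuallyEq hev1).congr_deriv ?_
    rw [hvφ r (le_of_lt hr), hsplit r (le_of_lt hr)]
    simp only [hg1, hg2]
    rw [e1, e2, e3, e4]
    linear_combination (-(Complex.I * ((r:ℂ) ^ (-n - 1) * A r))/2
      + Complex.I * ((r:ℂ) ^ (n - 1) * (CB - A2 r))/2) * hkc + hc1
  · refine (h2.congr_of_eventuallyEq hev2).congr_deriv ?_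
    rw [hvr r (le_of_lt hr), hsplit r (le_of_lt hr)]
    simp only [hg1, hg2]
    rw [e1, e2, e3, e4]
    linear_combination (-((r:ℂ)^(-n-1) * A r + (r:ℂ)^(n-1) * (CB - A2 r))/2) * hIn
      + hc2 + ((r:ℂ) * w r) * e5
end

section
/- Fix r₀ > 0, k ∈ ℤ, σ = sign(k) (σ = 0 when k = 0), let w_k : [r₀,∞) → ℂ be continuous with C_k := ∫_{r₀}^∞ s|w_k(s)| ds < ∞, let v∞r, v∞φ ∈ ℂ, and define v_r(r) = σ (i r^{-|k|-1}/2) ∫_{r₀}^r s^{|k|+1} w_k(s) ds + σ (i r^{|k|-1}/2) ∫_r^∞ s^{-|k|+1} w_k(s) ds + v∞r and v_φ(r) = (r^{-|k|-1}/2) ∫_{r₀}^r s^{|k|+1} w_k(s) ds − (r^{|k|-1}/2) ∫_r^∞ s^{-|k|+1} w_k(s) ds + v∞φ for r ≥ r₀. Then for every r ≥ r₀: |v_r(r) − v∞r| ≤ C_k/r and |v_φ(r) − v∞φ| ≤ C_k/r; in particular v_r and v_φ are bounded on [r₀,∞). -/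
open MeasureTheory Set Complex

lemma sign_norm_le_one (k : ℤ) : ‖(Int.sign k : ℂ)‖ ≤ 1 := by
  rcases lt_trichotomy k 0 with h | h | h
  · simp [Int.sign_eq_neg_one_of_neg h]
  · simp [h]
  · simp [Int.sign_eq_one_of_pos h]

/-- L∞ bound for the Biot–Savart velocity coefficients.
With `C_k = ∫_{r₀}^∞ s |w_k(s)| ds`, the velocity Fourier coefficients defined by the
Biot–Savart formulas satisfy `|v_r(r) − vIr| ≤ C_k / r` and `|v_φ(r) − vIφ| ≤ C_k / r`
for every `r ≥ r₀`; in particular `v_r` and `v_φ` are bounded on `[r₀,∞)`. -/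
theorem stmt1 (r₀ : ℝ) (hr₀ : 0 < r₀) (k : ℤ) (w : ℝ → ℂ)
    (hw_cont : ContinuousOn w (Set.Ici r₀))
    (hw_int : IntegrableOn (fun s : ℝ => s * ‖w s‖) (Set.Ioi r₀))
    (vIr vIφ : ℂ)
    (vr vφ : ℝ → ℂ)
    (hvr : ∀ r ≥ r₀, vr r =
      (Int.sign k : ℂ) * (Complex.I * (r : ℂ) ^ (-(|k| : ℤ) - 1) / 2) *
        (∫ s in Set.Ioc r₀ r, (s : ℂ) ^ ((|k| : ℤ) + 1) * w s)
      + (Int.sign k : ℂ) * (Complex.I * (r : ℂ) ^ ((|k| : ℤ) - 1) / 2) *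
        (∫ s in Set.Ioi r, (s : ℂ) ^ (-(|k| : ℤ) + 1) * w s)
      + vIr)
    (hvφ : ∀ r ≥ r₀, vφ r =
      ((r : ℂ) ^ (-(|k| : ℤ) - 1) / 2) *
        (∫ s in Set.Ioc r₀ r, (s : ℂ) ^ ((|k| : ℤ) + 1) * w s)
      - ((r : ℂ) ^ ((|k| : ℤ) - 1) / 2) *
        (∫ s in Set.Ioi r, (s : ℂ) ^ (-(|k| : ℤ) + 1) * w s)
      + vIφ) :
    (∀ r ≥ r₀,
      ‖vr r - vIr‖ ≤ (∫ s in Set.Ioi r₀, s * ‖w s‖) / r ∧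
      ‖vφ r - vIφ‖ ≤ (∫ s in Set.Ioi r₀, s * ‖w s‖) / r) ∧
    ∃ B : ℝ, ∀ r ≥ r₀, ‖vr r‖ ≤ B ∧ ‖vφ r‖ ≤ B := by
  set C : ℝ := ∫ s in Set.Ioi r₀, s * ‖w s‖ with hCdef
  set n : ℕ := k.natAbs with hn
  have hnk : (|k| : ℤ) = (n : ℤ) := Int.abs_eq_natAbs k
  have hC0 : 0 ≤ C := by
    apply setIntegral_nonneg measurableSet_Ioi
    intro s hs
    have hs0 : (0:ℝ) ≤ s := le_of_lt (lt_trans hr₀ hs)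
    positivity
  -- the two integral estimates
  have key1 : ∀ r ≥ r₀,
      ‖∫ s in Set.Ioc r₀ r, (s : ℂ) ^ ((|k| : ℤ) + 1) * w s‖ ≤ r ^ (n : ℤ) * C := by
    intro r hr
    have hrpos : 0 < r := lt_of_lt_of_le hr₀ hr
    calc ‖∫ s in Set.Ioc r₀ r, (s : ℂ) ^ ((|k| : ℤ) + 1) * w s‖
        ≤ ∫ s in Set.Ioc r₀ r, ‖(s : ℂ) ^ ((|k| : ℤ) + 1) * w s‖ :=
          norm_integral_le_integral_norm _
      _ ≤ ∫ s in Set.Ioc r₀ r, r ^ (n : ℤ) * (s * ‖w s‖) := by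
          apply integral_mono_of_nonneg
          · filter_upwards with s using norm_nonneg _
          · exact ((hw_int.mono_set Set.Ioc_subset_Ioi_self).const_mul _)
          · filter_upwards [ae_restrict_mem measurableSet_Ioc] with s hs
            have hs0 : 0 < s := lt_trans hr₀ hs.1
            have h1 : ‖(s : ℂ) ^ ((|k| : ℤ) + 1) * w s‖ = s ^ n * s * ‖w s‖ := by
              rw [norm_mul, norm_zpow, Complex.norm_real, Real.norm_eq_abs,
                abs_of_pos hs0, hnk, zpow_add₀ hs0.ne', zpow_one, zpow_natCast]
            rw [h1]
            have h3 : s ^ n ≤ r ^ n := pow_le_pow_left₀ hs0.le hs.2 n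
            have := mul_le_mul_of_nonneg_right (mul_le_mul_of_nonneg_right h3 hs0.le)
              (norm_nonneg (w s))
            calc s ^ n * s * ‖w s‖ ≤ r ^ n * s * ‖w s‖ := this
              _ = r ^ (n : ℤ) * (s * ‖w s‖) := by rw [zpow_natCast]; ring
      _ = r ^ (n : ℤ) * ∫ s in Set.Ioc r₀ r, s * ‖w s‖ := integral_const_mul _ _
      _ ≤ r ^ (n : ℤ) * C := by
          apply mul_le_mul_of_nonneg_left _ (zpow_nonneg hrpos.le _)
          apply setIntegral_mono_set hw_int
          · filter_upwards [ae_restrict_mem measurableSet_Ioi] with s hs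
            have hs0 : (0:ℝ) ≤ s := le_of_lt (lt_trans hr₀ hs)
            positivity
          · exact HasSubset.Subset.eventuallyLE Set.Ioc_subset_Ioi_self
  have key2 : ∀ r ≥ r₀,
      ‖∫ s in Set.Ioi r, (s : ℂ) ^ (-(|k| : ℤ) + 1) * w s‖ ≤ r ^ (-(n : ℤ)) * C := by
    intro r hr
    have hrpos : 0 < r := lt_of_lt_of_le hr₀ hr
    calc ‖∫ s in Set.Ioi r, (s : ℂ) ^ (-(|k| : ℤ) + 1) * w s‖
        ≤ ∫ s in Set.Ioi r, ‖(s : ℂ) ^ (-(|k| : ℤ) + 1) * w s‖ :=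
          norm_integral_le_integral_norm _
      _ ≤ ∫ s in Set.Ioi r, r ^ (-(n : ℤ)) * (s * ‖w s‖) := by
          apply integral_mono_of_nonneg
          · filter_upwards with s using norm_nonneg _
          · exact ((hw_int.mono_set (Set.Ioi_subset_Ioi hr)).const_mul _)
          · filter_upwards [ae_restrict_mem measurableSet_Ioi] with s hs
            have hs0 : 0 < s := lt_of_le_of_lt hrpos.le hs
            have h1 : ‖(s : ℂ) ^ (-(|k| : ℤ) + 1) * w s‖
                = s ^ (-(n : ℤ)) * s * ‖w s‖ := by
              rw [norm_mul, norm_zpow, Complex.norm_real, Real.norm_eq_abs,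
                abs_of_pos hs0, hnk]
              rw [show (-(n:ℤ) + 1) = (-(n:ℤ)) + 1 from rfl, zpow_add₀ hs0.ne', zpow_one]
            rw [h1]
            have h3 : s ^ (-(n : ℤ)) ≤ r ^ (-(n : ℤ)) := by
              rw [zpow_neg, zpow_neg, zpow_natCast, zpow_natCast]
              exact inv_anti₀ (pow_pos hrpos n) (pow_le_pow_left₀ hrpos.le hs.le n)
            calc s ^ (-(n:ℤ)) * s * ‖w s‖ ≤ r ^ (-(n:ℤ)) * s * ‖w s‖ :=
                mul_le_mul_of_nonneg_right (mul_le_mul_of_nonneg_right h3 hs0.le)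
                  (norm_nonneg _)
              _ = r ^ (-(n:ℤ)) * (s * ‖w s‖) := by ring
      _ = r ^ (-(n : ℤ)) * ∫ s in Set.Ioi r, s * ‖w s‖ := integral_const_mul _ _
      _ ≤ r ^ (-(n : ℤ)) * C := by
          apply mul_le_mul_of_nonneg_left _ (zpow_nonneg hrpos.le _)
          apply setIntegral_mono_set hw_int
          · filter_upwards [ae_restrict_mem measurableSet_Ioi] with s hs
            have hs0 : (0:ℝ) ≤ s := le_of_lt (lt_trans hr₀ hs)
            positivity
          · exact HasSubset.Subset.eventuallyLE (Set.Ioi_subset_Ioi hr)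
  -- norms of the prefactors
  have hpre : ∀ r ≥ r₀, ∀ e : ℤ, ‖Complex.I * (r : ℂ) ^ e / 2‖ = r ^ e / 2 := by
    intro r hr e
    have hrpos : 0 < r := lt_of_lt_of_le hr₀ hr
    rw [norm_div, norm_mul, Complex.norm_I, one_mul, norm_zpow, Complex.norm_real,
      Real.norm_eq_abs, abs_of_pos hrpos]
    norm_num
  -- each of the four terms is ≤ C / (2 r)
  have hterm1 : ∀ r ≥ r₀,
      ‖((r : ℂ) ^ (-(|k| : ℤ) - 1) / 2) *
        (∫ s in Set.Ioc r₀ r, (s : ℂ) ^ ((|k| : ℤ) + 1) * w s)‖ ≤ C / (2 * r) := by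
    intro r hr
    have hrpos : 0 < r := lt_of_lt_of_le hr₀ hr
    rw [norm_mul, norm_div, norm_zpow, Complex.norm_real, Real.norm_eq_abs,
      abs_of_pos hrpos]
    have : ‖(2:ℂ)‖ = 2 := by norm_num
    rw [this]
    calc r ^ (-(|k| : ℤ) - 1) / 2 * ‖∫ s in Set.Ioc r₀ r, (s : ℂ) ^ ((|k| : ℤ) + 1) * w s‖
        ≤ r ^ (-(|k| : ℤ) - 1) / 2 * (r ^ (n : ℤ) * C) := by
          apply mul_le_mul_of_nonneg_left (key1 r hr)
          positivity
      _ = C / (2 * r) := by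
          have hx : r ^ (-(|k| : ℤ) - 1) * r ^ (n:ℤ) = r⁻¹ := by
            rw [hnk, ← zpow_add₀ hrpos.ne',
              show (-(n:ℤ) - 1 + n : ℤ) = -1 by ring, zpow_neg_one]
          rw [show r ^ (-(|k| : ℤ) - 1) / 2 * (r ^ (n:ℤ) * C)
              = r ^ (-(|k| : ℤ) - 1) * r ^ (n:ℤ) * C / 2 by ring, hx,
            inv_mul_eq_div, div_div, mul_comm r 2]
  have hterm2 : ∀ r ≥ r₀,
      ‖((r : ℂ) ^ ((|k| : ℤ) - 1) / 2) *
        (∫ s in Set.Ioi r, (s : ℂ) ^ (-(|k| : ℤ) + 1) * w s)‖ ≤ C / (2 * r) := by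
    intro r hr
    have hrpos : 0 < r := lt_of_lt_of_le hr₀ hr
    rw [norm_mul, norm_div, norm_zpow, Complex.norm_real, Real.norm_eq_abs,
      abs_of_pos hrpos]
    have : ‖(2:ℂ)‖ = 2 := by norm_num
    rw [this]
    calc r ^ ((|k| : ℤ) - 1) / 2 * ‖∫ s in Set.Ioi r, (s : ℂ) ^ (-(|k| : ℤ) + 1) * w s‖
        ≤ r ^ ((|k| : ℤ) - 1) / 2 * (r ^ (-(n : ℤ)) * C) := by
          apply mul_le_mul_of_nonneg_left (key2 r hr)
          positivity
      _ = C / (2 * r) := by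
          have hx : r ^ ((|k| : ℤ) - 1) * r ^ (-(n:ℤ)) = r⁻¹ := by
            rw [hnk, ← zpow_add₀ hrpos.ne',
              show ((n:ℤ) - 1 + -n : ℤ) = -1 by ring, zpow_neg_one]
          rw [show r ^ ((|k| : ℤ) - 1) / 2 * (r ^ (-(n:ℤ)) * C)
              = r ^ ((|k| : ℤ) - 1) * r ^ (-(n:ℤ)) * C / 2 by ring, hx,
            inv_mul_eq_div, div_div, mul_comm r 2]
  -- the main bound
  have main : ∀ r ≥ r₀, ‖vr r - vIr‖ ≤ C / r ∧ ‖vφ r - vIφ‖ ≤ C / r := by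
    intro r hr
    have hrpos : 0 < r := lt_of_lt_of_le hr₀ hr
    have hhalf : C / (2 * r) + C / (2 * r) = C / r := by field_simp; ring
    constructor
    · rw [hvr r hr]
      have heq : (Int.sign k : ℂ) * (Complex.I * (r : ℂ) ^ (-(|k| : ℤ) - 1) / 2) *
            (∫ s in Set.Ioc r₀ r, (s : ℂ) ^ ((|k| : ℤ) + 1) * w s)
          + (Int.sign k : ℂ) * (Complex.I * (r : ℂ) ^ ((|k| : ℤ) - 1) / 2) *
            (∫ s in Set.Ioi r, (s : ℂ) ^ (-(|k| : ℤ) + 1) * w s)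
          + vIr - vIr
          = (Int.sign k : ℂ) * Complex.I * (((r : ℂ) ^ (-(|k| : ℤ) - 1) / 2) *
            (∫ s in Set.Ioc r₀ r, (s : ℂ) ^ ((|k| : ℤ) + 1) * w s))
          + (Int.sign k : ℂ) * Complex.I * (((r : ℂ) ^ ((|k| : ℤ) - 1) / 2) *
            (∫ s in Set.Ioi r, (s : ℂ) ^ (-(|k| : ℤ) + 1) * w s)) := by ring
      rw [heq]
      have hsI : ‖(Int.sign k : ℂ) * Complex.I‖ ≤ 1 := by
        rw [norm_mul, Complex.norm_I, mul_one]; exact sign_norm_le_one k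
      refine le_trans (norm_add_le _ _) ?_
      have b1 : ‖(Int.sign k : ℂ) * Complex.I * (((r : ℂ) ^ (-(|k| : ℤ) - 1) / 2) *
          (∫ s in Set.Ioc r₀ r, (s : ℂ) ^ ((|k| : ℤ) + 1) * w s))‖ ≤ 1 * (C / (2 * r)) := by
        rw [norm_mul]
        exact mul_le_mul hsI (hterm1 r hr) (norm_nonneg _) zero_le_one
      have b2 : ‖(Int.sign k : ℂ) * Complex.I * (((r : ℂ) ^ ((|k| : ℤ) - 1) / 2) *
          (∫ s in Set.Ioi r, (s : ℂ) ^ (-(|k| : ℤ) + 1) * w s))‖ ≤ 1 * (C / (2 * r)) := by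
        rw [norm_mul]
        exact mul_le_mul hsI (hterm2 r hr) (norm_nonneg _) zero_le_one
      linarith
    · rw [hvφ r hr]
      have heq : ((r : ℂ) ^ (-(|k| : ℤ) - 1) / 2) *
            (∫ s in Set.Ioc r₀ r, (s : ℂ) ^ ((|k| : ℤ) + 1) * w s)
          - ((r : ℂ) ^ ((|k| : ℤ) - 1) / 2) *
            (∫ s in Set.Ioi r, (s : ℂ) ^ (-(|k| : ℤ) + 1) * w s)
          + vIφ - vIφ
          = ((r : ℂ) ^ (-(|k| : ℤ) - 1) / 2) *
            (∫ s in Set.Ioc r₀ r, (s : ℂ) ^ ((|k| : ℤ) + 1) * w s)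
          - ((r : ℂ) ^ ((|k| : ℤ) - 1) / 2) *
            (∫ s in Set.Ioi r, (s : ℂ) ^ (-(|k| : ℤ) + 1) * w s) := by ring
      rw [heq]
      calc ‖((r : ℂ) ^ (-(|k| : ℤ) - 1) / 2) *
            (∫ s in Set.Ioc r₀ r, (s : ℂ) ^ ((|k| : ℤ) + 1) * w s)
          - ((r : ℂ) ^ ((|k| : ℤ) - 1) / 2) *
            (∫ s in Set.Ioi r, (s : ℂ) ^ (-(|k| : ℤ) + 1) * w s)‖
          ≤ ‖((r : ℂ) ^ (-(|k| : ℤ) - 1) / 2) *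
            (∫ s in Set.Ioc r₀ r, (s : ℂ) ^ ((|k| : ℤ) + 1) * w s)‖
          + ‖((r : ℂ) ^ ((|k| : ℤ) - 1) / 2) *
            (∫ s in Set.Ioi r, (s : ℂ) ^ (-(|k| : ℤ) + 1) * w s)‖ := norm_sub_le _ _
        _ ≤ C / (2 * r) + C / (2 * r) := add_le_add (hterm1 r hr) (hterm2 r hr)
        _ = C / r := hhalf
  refine ⟨main, max ‖vIr‖ ‖vIφ‖ + C / r₀, fun r hr => ?_⟩
  have hrpos : 0 < r := lt_of_lt_of_le hr₀ hr
  have hCr : C / r ≤ C / r₀ := by gcongr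
  obtain ⟨h1, h2⟩ := main r hr
  constructor
  · calc ‖vr r‖ = ‖(vr r - vIr) + vIr‖ := by congr 1; ring
      _ ≤ ‖vr r - vIr‖ + ‖vIr‖ := norm_add_le _ _
      _ ≤ max ‖vIr‖ ‖vIφ‖ + C / r₀ := by
          have := le_max_left ‖vIr‖ ‖vIφ‖
          linarith
  · calc ‖vφ r‖ = ‖(vφ r - vIφ) + vIφ‖ := by congr 1; ring
      _ ≤ ‖vφ r - vIφ‖ + ‖vIφ‖ := norm_add_le _ _
      _ ≤ max ‖vIr‖ ‖vIφ‖ + C / r₀ := by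
          have := le_max_right ‖vIr‖ ‖vIφ‖
          linarith
end

section
/- Fix r₀ > 0, k ∈ ℤ, σ = sign(k) (σ = 0 when k = 0), let w_k : [r₀,∞) → ℂ be continuous with ∫_{r₀}^∞ s|w_k(s)| ds < ∞, and let v∞r, v∞φ ∈ ℂ satisfy either (|k| = 1 and v∞φ = i k v∞r) or (v∞r = v∞φ = 0). With v_r and v_φ defined by v_r(r) = σ (i r^{-|k|-1}/2) ∫_{r₀}^r s^{|k|+1} w_k(s) ds + σ (i r^{|k|-1}/2) ∫_r^∞ s^{-|k|+1} w_k(s) ds + v∞r and v_φ(r) = (r^{-|k|-1}/2) ∫_{r₀}^r s^{|k|+1} w_k(s) ds − (r^{|k|-1}/2) ∫_r^∞ s^{-|k|+1} w_k(s) ds + v∞φ, one has: v_r(r₀) = 0 and v_φ(r₀) = 0 if and only if r₀^{|k|-1} ∫_{r₀}^∞ s^{-|k|+1} w_k(s) ds = 2 v∞φ. -/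
open MeasureTheory Set Complex

/-- no-slip condition as a vorticity moment relation.
With the Biot–Savart formulas for `v_r, v_φ` in the exterior of the disc of radius `r₀`,
one has `v_r(r₀) = 0 ∧ v_φ(r₀) = 0` if and only if
`r₀^{|k|-1} ∫_{r₀}^∞ s^{-|k|+1} w_k(s) ds = 2 vIφ`. -/
theorem stmt2 (r₀ : ℝ) (hr₀ : 0 < r₀) (k : ℤ) (w : ℝ → ℂ)
    (hw_cont : ContinuousOn w (Set.Ici r₀))
    (hw_int : IntegrableOn (fun s : ℝ => s * ‖w s‖) (Set.Ioi r₀))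
    (vIr vIφ : ℂ)
    (hvI : (|k| = 1 ∧ vIφ = Complex.I * (k : ℂ) * vIr) ∨ (vIr = 0 ∧ vIφ = 0))
    (vr vφ : ℝ → ℂ)
    (hvr : ∀ r ≥ r₀, vr r =
      (Int.sign k : ℂ) * (Complex.I * (r : ℂ) ^ (-(|k| : ℤ) - 1) / 2) *
        (∫ s in Set.Ioc r₀ r, (s : ℂ) ^ ((|k| : ℤ) + 1) * w s)
      + (Int.sign k : ℂ) * (Complex.I * (r : ℂ) ^ ((|k| : ℤ) - 1) / 2) *
        (∫ s in Set.Ioi r, (s : ℂ) ^ (-(|k| : ℤ) + 1) * w s)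
      + vIr)
    (hvφ : ∀ r ≥ r₀, vφ r =
      ((r : ℂ) ^ (-(|k| : ℤ) - 1) / 2) *
        (∫ s in Set.Ioc r₀ r, (s : ℂ) ^ ((|k| : ℤ) + 1) * w s)
      - ((r : ℂ) ^ ((|k| : ℤ) - 1) / 2) *
        (∫ s in Set.Ioi r, (s : ℂ) ^ (-(|k| : ℤ) + 1) * w s)
      + vIφ) :
    (vr r₀ = 0 ∧ vφ r₀ = 0) ↔
      (r₀ : ℂ) ^ ((|k| : ℤ) - 1) *
        (∫ s in Set.Ioi r₀, (s : ℂ) ^ (-(|k| : ℤ) + 1) * w s) = 2 * vIφ := by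
  have h1 := hvr r₀ le_rfl
  have h2 := hvφ r₀ le_rfl
  simp only [Set.Ioc_self, MeasureTheory.setIntegral_empty, mul_zero, zero_mul, zero_add,
    zero_sub, neg_add_eq_iff_eq_add] at h1 h2
  set J := ∫ s in Set.Ioi r₀, (s : ℂ) ^ (-(|k| : ℤ) + 1) * w s with hJ
  rcases hvI with ⟨hk, hφ⟩ | ⟨h0r, h0φ⟩
  · have hk1 : ((|k| : ℤ) - 1) = 0 := by omega
    simp only [hk1, zpow_zero, one_mul] at h1 h2 ⊢
    rcases (abs_eq (by norm_num : (0:ℤ) ≤ 1)).mp hk with hk' | hk' <;>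
      subst hk' <;> simp only [Int.sign_one, Int.cast_one, Int.cast_neg, one_mul] at h1 hφ <;>
      constructor
    · rintro ⟨ha, hb⟩
      rw [h2] at hb
      linear_combination -2 * hb
    · intro h
      refine ⟨?_, ?_⟩
      · rw [h1, h, hφ]
        linear_combination vIr * Complex.I_sq
      · rw [h2, h]; ring
    · rintro ⟨ha, hb⟩
      rw [h2] at hb
      linear_combination -2 * hb
    · intro h
      refine ⟨?_, ?_⟩
      · rw [h1, h, hφ]
        simp only [Int.sign_neg, Int.sign_one, Int.cast_neg, Int.cast_one]
        linear_combination vIr * Complex.I_sq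
      · rw [h2, h]; ring
  · subst h0r h0φ
    have hne : ((r₀ : ℂ) ^ ((|k| : ℤ) - 1)) ≠ 0 := by
      apply zpow_ne_zero
      exact_mod_cast hr₀.ne'
    constructor
    · rintro ⟨ha, hb⟩
      rw [h2] at hb
      rw [mul_zero]
      rcases mul_eq_zero.mp (by linear_combination -hb : ((r₀:ℂ) ^ ((|k|:ℤ)-1) / 2) * J = 0) with h | h
      · exact absurd h (by simpa using hne)
      · rw [h, mul_zero]
    · intro h
      rw [mul_zero] at h
      rcases mul_eq_zero.mp h with h | h
      · exact absurd h hne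
      · rw [h1, h2, h]
        norm_num
end

section
/- Let r₀ > 0, T > 0, C > 0, k ∈ ℤ, and let u : [0,T] × [r₀,∞) → ℂ be continuously differentiable in t and twice continuously differentiable in s, satisfying for all t and s > r₀ the equation ∂ₜ u(t,s) = (1/s) ∂ₛ( s ∂ₛ u(t,s) ) − (k²/s²) u(t,s), together with the Robin boundary condition r₀ ∂ₛ u(t,s)|_{s=r₀} + |k| u(t,r₀) = 0 for all t, and the bounds |u(t,s)| ≤ C(1+s)^{-3}, |∂ₛ u(t,s)| ≤ C(1+s)^{-3}, |∂ₜ u(t,s)| ≤ C(1+s)^{-3}. Then the function t ↦ ∫_{r₀}^∞ s^{-|k|+1} u(t,s) ds is constant on [0,T]. -/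
open MeasureTheory Set Complex Filter

/-- per-Fourier-mode invariance of the vorticity moment under the
Stokes flow. If `u(t,s)` solves `∂ₜu = (1/s)(s ∂ₛu)' − (k²/s²)u` for `s > r₀`, with the
Robin boundary condition `r₀ ∂ₛu(t,r₀) + |k| u(t,r₀) = 0` and the stated decay bounds,
then `t ↦ ∫_{r₀}^∞ s^{-|k|+1} u(t,s) ds` is constant on `[0,T]`. -/
theorem stmt4 (r₀ T C : ℝ) (hr₀ : 0 < r₀) (hT : 0 < T) (hC : 0 < C) (k : ℤ)
    (u : ℝ → ℝ → ℂ)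
    (hs_smooth : ∀ t ∈ Set.Icc (0 : ℝ) T, ContDiffOn ℝ 2 (u t) (Set.Ici r₀))
    (ht_smooth : ∀ s ≥ r₀, ContDiffOn ℝ 1 (fun t => u t s) (Set.Icc 0 T))
    (pde : ∀ t ∈ Set.Icc (0 : ℝ) T, ∀ s > r₀,
      derivWithin (fun τ => u τ s) (Set.Icc 0 T) t =
        (1 / (s : ℂ)) * deriv (fun σ : ℝ => (σ : ℂ) * deriv (u t) σ) s
          - ((k : ℂ) ^ 2 / (s : ℂ) ^ 2) * u t s)
    (robin : ∀ t ∈ Set.Icc (0 : ℝ) T,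
      (r₀ : ℂ) * derivWithin (u t) (Set.Ici r₀) r₀ +
        ((|k| : ℤ) : ℂ) * u t r₀ = 0)
    (hu_bound : ∀ t ∈ Set.Icc (0 : ℝ) T, ∀ s ≥ r₀,
      ‖u t s‖ ≤ C * (1 + s) ^ (-3 : ℤ))
    (hds_bound : ∀ t ∈ Set.Icc (0 : ℝ) T, ∀ s ≥ r₀,
      ‖derivWithin (u t) (Set.Ici r₀) s‖ ≤ C * (1 + s) ^ (-3 : ℤ))
    (hdt_bound : ∀ t ∈ Set.Icc (0 : ℝ) T, ∀ s ≥ r₀,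
      ‖derivWithin (fun τ => u τ s) (Set.Icc 0 T) t‖ ≤ C * (1 + s) ^ (-3 : ℤ)) :
    ∀ t ∈ Set.Icc (0 : ℝ) T,
      (∫ s in Set.Ioi r₀, (s : ℂ) ^ (-(|k| : ℤ) + 1) * u t s) =
      (∫ s in Set.Ioi r₀, (s : ℂ) ^ (-(|k| : ℤ) + 1) * u 0 s) := by
  intro t ht
  set m : ℤ := -(|k| : ℤ) + 1 with hm_def
  set A : ℂ := ((|k| : ℤ) : ℂ) with hA_def
  set F : ℝ → ℂ := fun τ => ∫ s in Set.Ioi r₀, (s : ℂ) ^ m * u τ s with hF_def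
  have ha0 : (0 : ℤ) ≤ |k| := abs_nonneg k
  have hs0 : ∀ s : ℝ, r₀ ≤ s → 0 < s := fun s hs => lt_of_lt_of_le hr₀ hs
  have h1s : ∀ s : ℝ, r₀ ≤ s → 0 < 1 + s := fun s hs => by
    have := hs0 s hs; linarith
  have hsC : ∀ s : ℝ, r₀ ≤ s → ((s : ℝ) : ℂ) ≠ 0 := fun s hs => by
    exact_mod_cast (hs0 s hs).ne'
  set K : ℝ := max 1 (r₀ ^ m) with hK_def
  have hK1 : (1 : ℝ) ≤ K := le_max_left _ _
  have hKpos : (0 : ℝ) < K := lt_of_lt_of_le one_pos hK1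
  -- the basic power bound
  have hKm : ∀ s : ℝ, r₀ ≤ s → s ^ m ≤ K * (1 + s) := by
    intro s hs
    have hsp := hs0 s hs
    have h1p := h1s s hs
    rcases eq_or_lt_of_le ha0 with h0 | h1
    · have hm1 : m = 1 := by omega
      rw [hm1, zpow_one]
      nlinarith
    · have hm0 : m ≤ 0 := by omega
      have hrm : s ^ m ≤ r₀ ^ m := by
        obtain ⟨n, hn⟩ := Int.eq_ofNat_of_zero_le (show (0:ℤ) ≤ -m by omega)
        have hsm : s ^ m = (s ^ n)⁻¹ := by
          rw [← zpow_natCast s n, ← hn, ← zpow_neg, neg_neg]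
        have hrm' : r₀ ^ m = (r₀ ^ n)⁻¹ := by
          rw [← zpow_natCast r₀ n, ← hn, ← zpow_neg, neg_neg]
        rw [hsm, hrm']
        have h1 : r₀ ^ n ≤ s ^ n := pow_le_pow_left₀ hr₀.le hs n
        exact inv_anti₀ (pow_pos hr₀ n) h1
      have hrK : r₀ ^ m ≤ K := le_max_right _ _
      nlinarith
  -- norm bound transfer
  have hnorm : ∀ s : ℝ, r₀ ≤ s → ∀ X : ℂ, ‖X‖ ≤ C * (1 + s) ^ (-3 : ℤ) →
      ‖(s : ℂ) ^ m * X‖ ≤ C * K * (1 + s) ^ (-2 : ℤ) := by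
    intro s hs X hX
    have h1p := h1s s hs
    have hzm : ‖(s : ℂ) ^ m‖ = s ^ m := by
      rw [norm_zpow, Complex.norm_real, Real.norm_eq_abs, abs_of_pos (hs0 s hs)]
    rw [norm_mul, hzm]
    calc s ^ m * ‖X‖ ≤ (K * (1 + s)) * (C * (1 + s) ^ (-3 : ℤ)) := by
          apply mul_le_mul (hKm s hs) hX (norm_nonneg X) (by positivity)
      _ = C * K * (1 + s) ^ (-2 : ℤ) := by
          rw [show (-2 : ℤ) = 1 + -3 by norm_num, zpow_add₀ (ne_of_gt h1p), zpow_one]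
          ring
  -- integrable dominating function
  have hibase : IntegrableOn (fun s : ℝ => (1 + s) ^ (-2 : ℤ)) (Set.Ioi r₀) volume := by
    apply Integrable.mono' (integrableOn_Ioi_rpow_of_lt (show (-2:ℝ) < -1 by norm_num) hr₀)
    · apply ContinuousOn.aestronglyMeasurable _ measurableSet_Ioi
      intro s hs
      have h1 : 1 + s ≠ 0 := ne_of_gt (h1s s (le_of_lt hs))
      exact ((continuousAt_const.add continuousAt_id).zpow₀ _ (Or.inl h1)).continuousWithinAt
    · filter_upwards [ae_restrict_mem measurableSet_Ioi] with s hs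
      have hsp := hs0 s (le_of_lt hs)
      have h1p := h1s s (le_of_lt hs)
      rw [Real.norm_eq_abs, abs_of_pos (by positivity)]
      rw [show ((-2:ℝ)) = ((-2 : ℤ) : ℝ) by norm_num, Real.rpow_intCast]
      have h2 : (1 + s) ^ (-2 : ℤ) = ((1+s)^(2:ℕ))⁻¹ := by
        rw [show (-2:ℤ) = -(2:ℕ) by norm_num, zpow_neg, zpow_natCast]
      have h3 : (s : ℝ) ^ (-2 : ℤ) = (s^(2:ℕ))⁻¹ := by
        rw [show (-2:ℤ) = -(2:ℕ) by norm_num, zpow_neg, zpow_natCast]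
      rw [h2, h3]
      apply inv_anti₀ (by positivity)
      nlinarith
  have hibound : ∀ D : ℝ, IntegrableOn (fun s : ℝ => D * (1 + s) ^ (-2 : ℤ))
      (Set.Ioi r₀) volume := fun D => hibase.const_mul D
  -- measurability of the integrand
  have hmeas_g : ∀ t' ∈ Set.Icc (0 : ℝ) T, AEStronglyMeasurable
      (fun s : ℝ => (s : ℂ) ^ m * u t' s) (volume.restrict (Set.Ioi r₀)) := by
    intro t' ht'
    apply ContinuousOn.aestronglyMeasurable _ measurableSet_Ioi
    have hz : ContinuousOn (fun s : ℝ => (s : ℂ) ^ m) (Set.Ioi r₀) := by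
      intro s hs
      exact ((continuousAt_zpow₀ _ _ (Or.inl (hsC s (le_of_lt hs)))).comp
        Complex.continuous_ofReal.continuousAt).continuousWithinAt
    exact hz.mul ((hs_smooth t' ht').continuousOn.mono Ioi_subset_Ici_self)
  have hint_g : ∀ t' ∈ Set.Icc (0 : ℝ) T, IntegrableOn
      (fun s : ℝ => (s : ℂ) ^ m * u t' s) (Set.Ioi r₀) volume := by
    intro t' ht'
    apply Integrable.mono' (hibound (C * K)) (hmeas_g t' ht')
    filter_upwards [ae_restrict_mem measurableSet_Ioi] with s hs
    exact hnorm s hs.le _ (hu_bound t' ht' s hs.le)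
  -- the key spatial derivative structure
  have hG_deriv : ∀ t' ∈ Set.Icc (0 : ℝ) T, ∀ s ∈ Set.Ioi r₀,
      HasDerivAt (fun σ : ℝ => (σ : ℂ) ^ m * derivWithin (u t') (Set.Ici r₀) σ
          + A * ((σ : ℂ) ^ (m - 1) * u t' σ))
        ((s : ℂ) ^ m * derivWithin (fun τ => u τ s) (Set.Icc 0 T) t') s := by
    intro t' ht' s hs
    have hsr : r₀ < s := hs
    have hsp : (0:ℝ) < s := hr₀.trans hsr
    have hzC : ((s:ℝ):ℂ) ≠ 0 := hsC s hsr.le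
    have hnhds : Set.Ici r₀ ∈ nhds s := Ici_mem_nhds hsr
    have hw_cd : ContDiffOn ℝ 1 (derivWithin (u t') (Set.Ici r₀)) (Set.Ici r₀) :=
      (hs_smooth t' ht').derivWithin (uniqueDiffOn_Ici r₀) (by norm_num)
    have hu_da : HasDerivAt (u t') (derivWithin (u t') (Set.Ici r₀) s) s := by
      have h1 : DifferentiableWithinAt ℝ (u t') (Set.Ici r₀) s :=
        ((hs_smooth t' ht').differentiableOn (by norm_num)) s hsr.le
      have h3 : derivWithin (u t') (Set.Ici r₀) s = deriv (u t') s :=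
        derivWithin_of_mem_nhds hnhds
      rw [h3]
      exact (h1.differentiableAt hnhds).hasDerivAt
    have hw_da : HasDerivAt (derivWithin (u t') (Set.Ici r₀))
        (deriv (derivWithin (u t') (Set.Ici r₀)) s) s := by
      have h1 : DifferentiableWithinAt ℝ (derivWithin (u t') (Set.Ici r₀)) (Set.Ici r₀) s :=
        (hw_cd.differentiableOn (by norm_num)) s hsr.le
      exact (h1.differentiableAt hnhds).hasDerivAt
    have hww : deriv (u t') =ᶠ[nhds s] derivWithin (u t') (Set.Ici r₀) := by
      filter_upwards [isOpen_Ioi.mem_nhds hs] with σ hσ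
      exact (derivWithin_of_mem_nhds (Ici_mem_nhds hσ)).symm
    have hd : HasDerivAt (deriv (u t')) (deriv (derivWithin (u t') (Set.Ici r₀)) s) s :=
      hw_da.congr_of_eventuallyEq hww
    have hinner : HasDerivAt (fun σ : ℝ => (σ : ℂ) * deriv (u t') σ)
        (derivWithin (u t') (Set.Ici r₀) s
          + (s:ℂ) * deriv (derivWithin (u t') (Set.Ici r₀)) s) s := by
      have hb : HasDerivAt (fun σ : ℝ => ((σ:ℝ):ℂ)) 1 s := by
        simpa using (hasDerivAt_id s).ofReal_comp
      have h5 := hb.mul hd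
      simp only [one_mul] at h5
      rw [show deriv (u t') s = derivWithin (u t') (Set.Ici r₀) s from
        (derivWithin_of_mem_nhds hnhds).symm] at h5
      exact h5
    have hpde' : derivWithin (fun τ => u τ s) (Set.Icc 0 T) t' =
        (1/(s:ℂ)) * (derivWithin (u t') (Set.Ici r₀) s
          + (s:ℂ) * deriv (derivWithin (u t') (Set.Ici r₀)) s)
          - ((k:ℂ)^2/(s:ℂ)^2) * u t' s := by
      rw [pde t' ht' s hsr, hinner.deriv]
    have hzp : HasDerivAt (fun σ : ℝ => ((σ:ℝ):ℂ) ^ m) ((m:ℂ) * (s:ℂ)^(m-1)) s :=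
      (hasDerivAt_zpow m (s:ℂ) (Or.inl hzC)).comp_ofReal
    have hzp' : HasDerivAt (fun σ : ℝ => ((σ:ℝ):ℂ) ^ (m-1))
        (((m-1 : ℤ):ℂ) * (s:ℂ)^(m-1-1)) s :=
      (hasDerivAt_zpow (m-1) (s:ℂ) (Or.inl hzC)).comp_ofReal
    have hG := (hzp.mul hw_da).add (HasDerivAt.const_mul A (hzp'.mul hu_da))
    refine hG.congr_deriv ?_
    symm
    rw [hpde']
    have hmC : ((m : ℤ):ℂ) = 1 - A := by rw [hm_def, hA_def]; push_cast; ring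
    have hm1C : (((m - 1 : ℤ)):ℂ) = -A := by rw [hm_def, hA_def]; push_cast; ring
    have hk2 : ((k:ℂ))^2 = A^2 := by
      rw [hA_def]
      norm_cast
      exact (_root_.sq_abs k).symm
    rw [hmC, hm1C, hk2, zpow_sub_one₀ hzC (m-1), zpow_sub_one₀ hzC m]
    field_simp
    ring
  -- measurability of the time-derivative integrand
  have hmeas_v : ∀ t' ∈ Set.Icc (0 : ℝ) T, AEStronglyMeasurable
      (fun s : ℝ => (s : ℂ) ^ m * derivWithin (fun τ => u τ s) (Set.Icc 0 T) t')
      (volume.restrict (Set.Ioi r₀)) := by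
    intro t' ht'
    apply ((stronglyMeasurable_deriv (fun σ : ℝ => (σ : ℂ) ^ m *
      derivWithin (u t') (Set.Ici r₀) σ + A * ((σ : ℂ) ^ (m - 1) * u t' σ))).aestronglyMeasurable.restrict).congr
    filter_upwards [ae_restrict_mem measurableSet_Ioi] with s hs
    exact (hG_deriv t' ht' s hs).deriv
  have hint_v : ∀ t' ∈ Set.Icc (0 : ℝ) T, IntegrableOn
      (fun s : ℝ => (s : ℂ) ^ m * derivWithin (fun τ => u τ s) (Set.Icc 0 T) t')
      (Set.Ioi r₀) volume := by
    intro t' ht'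
    apply Integrable.mono' (hibound (C * K)) (hmeas_v t' ht')
    filter_upwards [ae_restrict_mem measurableSet_Ioi] with s hs
    exact hnorm s hs.le _ (hdt_bound t' ht' s hs.le)
  -- the integral of the time derivative vanishes
  have hGzero : ∀ t' ∈ Set.Icc (0 : ℝ) T,
      (∫ s in Set.Ioi r₀, (s : ℂ) ^ m * derivWithin (fun τ => u τ s) (Set.Icc 0 T) t') = 0 := by
    intro t' ht'
    have hw_cd : ContDiffOn ℝ 1 (derivWithin (u t') (Set.Ici r₀)) (Set.Ici r₀) :=
      (hs_smooth t' ht').derivWithin (uniqueDiffOn_Ici r₀) (by norm_num)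
    have hG_cont : ContinuousWithinAt (fun σ : ℝ => (σ : ℂ) ^ m * derivWithin (u t') (Set.Ici r₀) σ
        + A * ((σ : ℂ) ^ (m - 1) * u t' σ)) (Set.Ici r₀) r₀ := by
      have hc0 : ∀ (j : ℤ), ContinuousWithinAt (fun σ : ℝ => ((σ:ℝ):ℂ)^j) (Set.Ici r₀) r₀ :=
        fun j => ((continuousAt_zpow₀ _ _ (Or.inl (hsC r₀ le_rfl))).comp
          Complex.continuous_ofReal.continuousAt).continuousWithinAt
      have hcw : ContinuousWithinAt (derivWithin (u t') (Set.Ici r₀)) (Set.Ici r₀) r₀ :=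
        (hw_cd.continuousOn) r₀ Set.self_mem_Ici
      have hcu : ContinuousWithinAt (u t') (Set.Ici r₀) r₀ :=
        (hs_smooth t' ht').continuousOn r₀ Set.self_mem_Ici
      exact ((hc0 m).mul hcw).add (continuousWithinAt_const.mul ((hc0 (m-1)).mul hcu))
    have hG_tendsto : Tendsto (fun σ : ℝ => (σ : ℂ) ^ m * derivWithin (u t') (Set.Ici r₀) σ
        + A * ((σ : ℂ) ^ (m - 1) * u t' σ)) atTop (nhds 0) := by
      have haR : (0:ℝ) ≤ ((|k| : ℤ) : ℝ) := by positivity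
      have hbnd : ∀ᶠ (σ : ℝ) in atTop,
          ‖(σ : ℂ) ^ m * derivWithin (u t') (Set.Ici r₀) σ + A * ((σ : ℂ) ^ (m - 1) * u t' σ)‖
            ≤ (C * K + ((|k| : ℤ) : ℝ) * (C * K) * r₀⁻¹) * (1 + σ)^(-2:ℤ) := by
        filter_upwards [eventually_ge_atTop r₀] with σ hσ
        have h1p := h1s σ hσ
        have hσp := hs0 σ hσ
        have hb1 : ‖(σ:ℂ)^m * derivWithin (u t') (Set.Ici r₀) σ‖ ≤ C * K * (1+σ)^(-2:ℤ) :=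
          hnorm σ hσ _ (hds_bound t' ht' σ hσ)
        have hb2 : ‖(σ:ℂ)^(m-1) * u t' σ‖ ≤ (C * K) * r₀⁻¹ * (1+σ)^(-2:ℤ) := by
          have h1 : ‖(σ:ℂ)^(m-1)‖ = σ ^ (m-1) := by
            rw [norm_zpow, Complex.norm_real, Real.norm_eq_abs, abs_of_pos hσp]
          have h2 : σ ^ (m-1) = σ ^ m * σ⁻¹ := zpow_sub_one₀ (ne_of_gt hσp) m
          rw [norm_mul, h1, h2]
          have h3 : σ⁻¹ ≤ r₀⁻¹ := inv_anti₀ hr₀ hσ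
          have h4 : ‖u t' σ‖ ≤ C * (1+σ)^(-3:ℤ) := hu_bound t' ht' σ hσ
          calc σ ^ m * σ⁻¹ * ‖u t' σ‖
              ≤ (K * (1+σ)) * r₀⁻¹ * (C * (1+σ)^(-3:ℤ)) := by
                apply mul_le_mul _ h4 (norm_nonneg _) (by positivity)
                apply mul_le_mul (hKm σ hσ) h3 (by positivity) (by positivity)
            _ = (C*K) * r₀⁻¹ * (1+σ)^(-2:ℤ) := by
                rw [show (-2:ℤ) = 1 + -3 by norm_num, zpow_add₀ (ne_of_gt h1p), zpow_one]
                ring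
        have hA : ‖A‖ = ((|k| : ℤ) : ℝ) := by
          rw [hA_def, Complex.norm_intCast]
          exact abs_of_nonneg (by positivity)
        calc ‖(σ:ℂ)^m * derivWithin (u t') (Set.Ici r₀) σ + A * ((σ:ℂ)^(m-1) * u t' σ)‖
            ≤ ‖(σ:ℂ)^m * derivWithin (u t') (Set.Ici r₀) σ‖ + ‖A‖ * ‖(σ:ℂ)^(m-1) * u t' σ‖ := by
              refine (norm_add_le _ _).trans ?_
              rw [norm_mul A ((σ:ℂ)^(m-1) * u t' σ)]
          _ ≤ C*K*(1+σ)^(-2:ℤ) + ((|k| : ℤ) : ℝ) * ((C*K) * r₀⁻¹ * (1+σ)^(-2:ℤ)) := by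
              apply add_le_add hb1
              rw [hA]
              exact mul_le_mul_of_nonneg_left hb2 haR
          _ = (C * K + ((|k| : ℤ) : ℝ) * (C * K) * r₀⁻¹) * (1 + σ)^(-2:ℤ) := by ring
      have htnd : Tendsto (fun σ : ℝ => (C * K + ((|k| : ℤ) : ℝ) * (C * K) * r₀⁻¹) * (1 + σ)^(-2:ℤ))
          atTop (nhds 0) := by
        have h1 : Tendsto (fun σ:ℝ => (1+σ)) atTop atTop :=
          tendsto_atTop_add_const_left _ 1 tendsto_id
        have h2 : Tendsto (fun x:ℝ => x^(-2:ℤ)) atTop (nhds 0) :=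
          tendsto_zpow_atTop_zero (by norm_num)
        have h3 := (h2.comp h1).const_mul (C * K + ((|k| : ℤ) : ℝ) * (C * K) * r₀⁻¹)
        simpa using h3
      exact squeeze_zero_norm' hbnd htnd
    have key := integral_Ioi_of_hasDerivAt_of_tendsto
      (f' := fun s => (s:ℂ)^m * derivWithin (fun τ => u τ s) (Set.Icc 0 T) t')
      hG_cont (fun s hs => hG_deriv t' ht' s hs) (hint_v t' ht') hG_tendsto
    have hGr₀ : ((r₀:ℝ):ℂ) ^ m * derivWithin (u t') (Set.Ici r₀) r₀
        + A * (((r₀:ℝ):ℂ) ^ (m - 1) * u t' r₀) = 0 := by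
      have h2 : ((r₀:ℝ):ℂ) ^ m * derivWithin (u t') (Set.Ici r₀) r₀
          + A * (((r₀:ℝ):ℂ) ^ (m - 1) * u t' r₀)
          = ((r₀:ℝ):ℂ)^(m-1) * ((r₀:ℂ) * derivWithin (u t') (Set.Ici r₀) r₀ + A * u t' r₀) := by
        have hp : ((r₀:ℝ):ℂ)^m = ((r₀:ℝ):ℂ)^(m-1) * (r₀:ℂ) := by
          rw [← zpow_add_one₀ (hsC r₀ le_rfl) (m-1)]
          norm_num
        rw [hp]
        ring
      rw [h2, robin t' ht', mul_zero]
    rw [key, hGr₀, sub_zero]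
  -- interior derivative of F is zero
  have hFderiv : ∀ t' ∈ Set.Ioo (0 : ℝ) T, HasDerivAt F 0 t' := by
    intro t' ht'
    have hε : 0 < min t' (T - t') := lt_min ht'.1 (by linarith [ht'.2])
    have hsub : Metric.ball t' (min t' (T - t')) ⊆ Set.Ioo 0 T := by
      intro x hx
      rw [Metric.mem_ball, Real.dist_eq] at hx
      have h1 := (abs_lt.1 hx).1
      have h2 := (abs_lt.1 hx).2
      have h3 : min t' (T - t') ≤ t' := min_le_left _ _
      have h4 : min t' (T - t') ≤ T - t' := min_le_right _ _
      constructor <;> linarith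
    have hF_meas : ∀ᶠ τ in nhds t', AEStronglyMeasurable
        (fun s : ℝ => (s:ℂ)^m * u τ s) (volume.restrict (Set.Ioi r₀)) := by
      filter_upwards [Icc_mem_nhds ht'.1 ht'.2] with τ hτ
      exact hmeas_g τ hτ
    have h_bound : ∀ᵐ (s : ℝ) ∂(volume.restrict (Set.Ioi r₀)),
        ∀ τ ∈ Metric.ball t' (min t' (T - t')),
        ‖(s:ℂ)^m * derivWithin (fun τ' => u τ' s) (Set.Icc 0 T) τ‖ ≤ C * K * (1+s)^(-2:ℤ) := by
      filter_upwards [ae_restrict_mem measurableSet_Ioi] with s hs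
      intro τ hτ
      exact hnorm s hs.le _ (hdt_bound τ (Set.Ioo_subset_Icc_self (hsub hτ)) s hs.le)
    have h_diff : ∀ᵐ (s : ℝ) ∂(volume.restrict (Set.Ioi r₀)),
        ∀ τ ∈ Metric.ball t' (min t' (T - t')),
        HasDerivAt (fun τ' => (s:ℂ)^m * u τ' s)
          ((s:ℂ)^m * derivWithin (fun τ' => u τ' s) (Set.Icc 0 T) τ) τ := by
      filter_upwards [ae_restrict_mem measurableSet_Ioi] with s hs
      intro τ hτ
      have hτ' := hsub hτ
      have hnh : Set.Icc (0:ℝ) T ∈ nhds τ := Icc_mem_nhds hτ'.1 hτ'.2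
      have hdw : DifferentiableWithinAt ℝ (fun τ' => u τ' s) (Set.Icc 0 T) τ :=
        ((ht_smooth s hs.le).differentiableOn (by norm_num)) τ (Set.Ioo_subset_Icc_self hτ')
      have hda := hdw.differentiableAt hnh
      have h3 : derivWithin (fun τ' => u τ' s) (Set.Icc 0 T) τ = deriv (fun τ' => u τ' s) τ :=
        derivWithin_of_mem_nhds hnh
      rw [h3]
      exact HasDerivAt.const_mul _ hda.hasDerivAt
    obtain ⟨-, key⟩ := hasDerivAt_integral_of_dominated_loc_of_deriv_le
      (μ := volume.restrict (Set.Ioi r₀))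
      (F := fun τ (s:ℝ) => (s : ℂ) ^ m * u τ s)
      (F' := fun τ (s:ℝ) => (s : ℂ) ^ m * derivWithin (fun τ' => u τ' s) (Set.Icc 0 T) τ)
      (bound := fun s : ℝ => C * K * (1 + s) ^ (-2:ℤ)) (Metric.ball_mem_nhds t' hε)
      hF_meas (hint_g t' (Set.Ioo_subset_Icc_self ht'))
      (hmeas_v t' (Set.Ioo_subset_Icc_self ht')) h_bound (hibound (C*K)) h_diff
    have h0 := hGzero t' (Set.Ioo_subset_Icc_self ht')
    rw [h0] at key
    exact key
  -- continuity of F on the closed interval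
  have hFcont : ∀ t' ∈ Set.Icc (0 : ℝ) T,
      Tendsto F (nhdsWithin t' (Set.Icc 0 T)) (nhds (F t')) := by
    intro t' ht'
    apply tendsto_integral_filter_of_dominated_convergence
      (fun s : ℝ => C * K * (1 + s) ^ (-2 : ℤ))
    · filter_upwards [self_mem_nhdsWithin] with τ hτ
      exact hmeas_g τ hτ
    · filter_upwards [self_mem_nhdsWithin] with τ hτ
      filter_upwards [ae_restrict_mem measurableSet_Ioi] with s hs
      exact hnorm s hs.le _ (hu_bound τ hτ s hs.le)
    · exact hibound (C * K)
    · filter_upwards [ae_restrict_mem measurableSet_Ioi] with s hs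
      exact Tendsto.const_mul _ ((ht_smooth s hs.le).continuousOn t' ht')
  -- F is constant on the open interval
  have hIoo_const : ∀ x ∈ Set.Ioo (0 : ℝ) T, ∀ y ∈ Set.Ioo (0 : ℝ) T, F x = F y := by
    have key : ∀ x ∈ Set.Ioo (0 : ℝ) T, ∀ y ∈ Set.Ioo (0 : ℝ) T, x ≤ y → F y = F x := by
      intro x hx y hy hxy
      have hsub : Set.Icc x y ⊆ Set.Ioo (0 : ℝ) T := fun z hz =>
        ⟨lt_of_lt_of_le hx.1 hz.1, lt_of_le_of_lt hz.2 hy.2⟩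
      have hcont : ContinuousOn F (Set.Icc x y) := fun z hz =>
        (hFderiv z (hsub hz)).continuousAt.continuousWithinAt
      have hder : ∀ z ∈ Set.Ico x y, HasDerivWithinAt F 0 (Set.Ici z) z := fun z hz =>
        (hFderiv z (hsub (Set.Ico_subset_Icc_self hz))).hasDerivWithinAt
      exact constant_of_has_deriv_right_zero hcont hder y (Set.right_mem_Icc.2 hxy)
    intro x hx y hy
    rcases le_total x y with h | h
    · exact (key x hx y hy h).symm
    · exact key y hy x hx h
  -- conclude by continuity from the interior
  have hconst : ∀ t' ∈ Set.Icc (0 : ℝ) T, F t' = F (T / 2) := by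
    intro t' ht'
    have hy₀ : T / 2 ∈ Set.Ioo (0 : ℝ) T := ⟨by linarith, by linarith⟩
    have hne : (nhdsWithin t' (Set.Ioo (0 : ℝ) T)).NeBot := by
      rw [← mem_closure_iff_nhdsWithin_neBot, closure_Ioo (ne_of_lt hT)]
      exact ht'
    have h1 : Tendsto F (nhdsWithin t' (Set.Ioo 0 T)) (nhds (F t')) :=
      (hFcont t' ht').mono_left (nhdsWithin_mono _ Set.Ioo_subset_Icc_self)
    have h2 : Tendsto F (nhdsWithin t' (Set.Ioo 0 T)) (nhds (F (T / 2))) := by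
      apply Tendsto.congr' _ tendsto_const_nhds
      filter_upwards [self_mem_nhdsWithin] with x hx
      exact hIoo_const (T / 2) hy₀ x hx
    exact tendsto_nhds_unique h1 h2
  exact (hconst t ht).trans (hconst 0 ⟨le_refl 0, hT.le⟩).symm
end

section
/- Let r₀ > 0, T > 0, C > 0, k ∈ ℤ with k ≠ 0, σ = sign(k), and a, b ∈ ℂ. Let w_{k-1}, w_k, w_{k+1} : [0,T] × [r₀,∞) → ℂ be such that w_k is continuously differentiable in t and twice continuously differentiable in s, w_{k-1} and w_{k+1} are continuously differentiable in s, all three functions and their s-derivatives are bounded in absolute value by C(1+s)^{-3} uniformly in t, and |∂ₜ w_k(t,s)| ≤ C(1+s)^{-3}. Assume the Oseen equation in Fourier form: ∂ₜ w_k(t,s) = (1/s)∂ₛ(s ∂ₛ w_k) − (k²/s²) w_k − [ a ∂ₛ w_{k-1}(t,s) + b ∂ₛ w_{k+1}(t,s) − ((k−1)a/s) w_{k-1}(t,s) + ((k+1)b/s) w_{k+1}(t,s) ] for all t and s > r₀; the boundary condition r₀ ∂ₛ w_k(t,s)|_{s=r₀} + |k| w_k(t,r₀) = r₀ ( a w_{k-1}(t,r₀)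 + b w_{k+1}(t,r₀) ) for all t; and the moment relation ∫_{r₀}^∞ s^{-|k|} w_{k+σ}(t,s) ds = 0 for all t. Then the function t ↦ ∫_{r₀}^∞ s^{-|k|+1} w_k(t,s) ds is constant on [0,T]. -/
open MeasureTheory Set Complex

lemma aux_zpow_le {r s : ℝ} (hr : 0 < r) (hrs : r ≤ s) {m : ℤ} (hm : m ≤ 0) :
    s ^ m ≤ r ^ m := by
  obtain ⟨j, rfl⟩ : ∃ j : ℕ, m = -(j : ℤ) := ⟨(-m).toNat, by omega⟩
  rw [zpow_neg, zpow_neg, zpow_natCast, zpow_natCast]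
  exact inv_anti₀ (pow_pos hr j) (pow_le_pow_left₀ hr.le hrs j)

lemma aux_int3 {r₀ : ℝ} (hr₀ : 0 < r₀) :
    IntegrableOn (fun s : ℝ => (1 + s) ^ (-3 : ℤ)) (Set.Ioi r₀) := by
  have h1 : IntegrableOn (fun s : ℝ => s ^ (-3 : ℝ)) (Set.Ioi r₀) :=
    integrableOn_Ioi_rpow_of_lt (by norm_num) hr₀
  refine h1.mono' ?_ ?_
  · have : (fun s : ℝ => (1 + s) ^ (-3 : ℤ)) = fun s : ℝ => ((1 + s) ^ (3:ℕ))⁻¹ := by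
      funext s; rw [zpow_neg]; norm_cast
    rw [this]
    exact (((measurable_const.add measurable_id).pow_const 3).inv).aestronglyMeasurable
  · refine (ae_restrict_iff' measurableSet_Ioi).2 (ae_of_all _ fun s hs => ?_)
    have hs0 : (0:ℝ) < s := hr₀.trans hs
    have h2 : (1 + s) ^ (-3 : ℤ) ≤ s ^ (-3 : ℤ) :=
      aux_zpow_le hs0 (by linarith) (by norm_num)
    have h3 : (0:ℝ) ≤ (1 + s) ^ (-3 : ℤ) := le_of_lt (zpow_pos (by linarith) _)
    rw [Real.norm_eq_abs, _root_.abs_of_nonneg h3]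
    calc (1 + s) ^ (-3 : ℤ) ≤ s ^ (-3 : ℤ) := h2
    _ = s ^ (-3 : ℝ) := by
        rw [show ((-3:ℝ)) = ((-3:ℤ):ℝ) by norm_num, Real.rpow_intCast]

lemma aux_intC {r₀ : ℝ} (K : ℝ) (hr₀ : 0 < r₀) {f : ℝ → ℂ}
    (hm : AEStronglyMeasurable f (volume.restrict (Set.Ioi r₀)))
    (hb : ∀ s ∈ Set.Ioi r₀, ‖f s‖ ≤ K * (1 + s) ^ (-3 : ℤ)) :
    IntegrableOn f (Set.Ioi r₀) := by
  refine ((aux_int3 hr₀).const_mul K).mono' hm ?_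
  exact (ae_restrict_iff' measurableSet_Ioi).2 (ae_of_all _ fun s hs => hb s hs)

/-- invariance of the vorticity moment under the Oseen flow, per Fourier
mode. `wk`, `wkm1`, `wkp1` play the roles of the Fourier coefficients `w_k`, `w_{k-1}`,
`w_{k+1}` of the vorticity; `a = v_{∞,r,1}`, `b = v_{∞,r,-1}`. Under the Oseen equation,
the Robin-type boundary condition with right-hand side `r₀(a w_{k-1}(r₀) + b w_{k+1}(r₀))`
and the moment relation `∫ s^{-|k|} w_{k+σ} ds = 0`, the weighted moment
`t ↦ ∫_{r₀}^∞ s^{-|k|+1} w_k(t,s) ds` is constant on `[0,T]`. -/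
theorem stmt5 (r₀ T C : ℝ) (hr₀ : 0 < r₀) (hT : 0 < T) (hC : 0 < C)
    (k : ℤ) (hk : k ≠ 0) (a b : ℂ)
    (wkm1 wk wkp1 : ℝ → ℝ → ℂ)
    (hs_smooth : ∀ t ∈ Set.Icc (0 : ℝ) T, ContDiffOn ℝ 2 (wk t) (Set.Ici r₀))
    (ht_smooth : ∀ s ≥ r₀, ContDiffOn ℝ 1 (fun t => wk t s) (Set.Icc 0 T))
    (hs_smooth_m : ∀ t ∈ Set.Icc (0 : ℝ) T, ContDiffOn ℝ 1 (wkm1 t) (Set.Ici r₀))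
    (hs_smooth_p : ∀ t ∈ Set.Icc (0 : ℝ) T, ContDiffOn ℝ 1 (wkp1 t) (Set.Ici r₀))
    (hbound : ∀ t ∈ Set.Icc (0 : ℝ) T, ∀ s ≥ r₀,
      ‖wkm1 t s‖ ≤ C * (1 + s) ^ (-3 : ℤ) ∧
      ‖wk t s‖ ≤ C * (1 + s) ^ (-3 : ℤ) ∧
      ‖wkp1 t s‖ ≤ C * (1 + s) ^ (-3 : ℤ))
    (hbound' : ∀ t ∈ Set.Icc (0 : ℝ) T, ∀ s ≥ r₀,
      ‖derivWithin (wkm1 t) (Set.Ici r₀) s‖ ≤ C * (1 + s) ^ (-3 : ℤ) ∧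
      ‖derivWithin (wk t) (Set.Ici r₀) s‖ ≤ C * (1 + s) ^ (-3 : ℤ) ∧
      ‖derivWithin (wkp1 t) (Set.Ici r₀) s‖ ≤ C * (1 + s) ^ (-3 : ℤ))
    (hdt_bound : ∀ t ∈ Set.Icc (0 : ℝ) T, ∀ s ≥ r₀,
      ‖derivWithin (fun τ => wk τ s) (Set.Icc 0 T) t‖ ≤ C * (1 + s) ^ (-3 : ℤ))
    (pde : ∀ t ∈ Set.Icc (0 : ℝ) T, ∀ s > r₀,
      derivWithin (fun τ => wk τ s) (Set.Icc 0 T) t =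
        (1 / (s : ℂ)) * deriv (fun σ : ℝ => (σ : ℂ) * deriv (wk t) σ) s
          - ((k : ℂ) ^ 2 / (s : ℂ) ^ 2) * wk t s
          - ( a * deriv (wkm1 t) s + b * deriv (wkp1 t) s
              - (((k : ℂ) - 1) * a / (s : ℂ)) * wkm1 t s
              + (((k : ℂ) + 1) * b / (s : ℂ)) * wkp1 t s ))
    (robin : ∀ t ∈ Set.Icc (0 : ℝ) T,
      (r₀ : ℂ) * derivWithin (wk t) (Set.Ici r₀) r₀ + ((|k| : ℤ) : ℂ) * wk t r₀ =
        (r₀ : ℂ) * (a * wkm1 t r₀ + b * wkp1 t r₀))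
    (moment : ∀ t ∈ Set.Icc (0 : ℝ) T,
      (∫ s in Set.Ioi r₀,
        (s : ℂ) ^ (-(|k| : ℤ)) * (if 0 < k then wkp1 else wkm1) t s) = 0) :
    ∀ t ∈ Set.Icc (0 : ℝ) T,
      (∫ s in Set.Ioi r₀, (s : ℂ) ^ (-(|k| : ℤ) + 1) * wk t s) =
      (∫ s in Set.Ioi r₀, (s : ℂ) ^ (-(|k| : ℤ) + 1) * wk 0 s) := by
  have hn1 : 1 ≤ |k| := Int.one_le_abs hk
  -- norm of the complex power weight
  have hw : ∀ (m : ℤ), m ≤ 0 → ∀ s ∈ Set.Ici r₀, ‖((s:ℂ) ^ m)‖ ≤ r₀ ^ m := by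
    intro m hm s hs
    have hs0 : (0:ℝ) < s := lt_of_lt_of_le hr₀ hs
    rw [norm_zpow, Complex.norm_real, Real.norm_eq_abs, _root_.abs_of_pos hs0]
    exact aux_zpow_le hr₀ hs hm
  -- continuity of the weight
  have hzc : ∀ (m : ℤ), ContinuousOn (fun s : ℝ => (s:ℂ) ^ m) (Set.Ici r₀) := by
    intro m
    exact Complex.continuous_ofReal.continuousOn.zpow₀ m fun x hx =>
      Or.inl (Complex.ofReal_ne_zero.2 (ne_of_gt (lt_of_lt_of_le hr₀ hx)))
  -- measurability of the basic integrand
  have hmeas : ∀ x ∈ Set.Icc (0:ℝ) T,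
      AEStronglyMeasurable (fun s : ℝ => (s:ℂ) ^ (-(|k| : ℤ) + 1) * wk x s)
        (volume.restrict (Set.Ioi r₀)) := by
    intro x hx
    exact (((hzc _).mul (hs_smooth x hx).continuousOn).mono Ioi_subset_Ici_self
      ).aestronglyMeasurable measurableSet_Ioi
  -- the uniform bound for the basic integrand
  have hb1 : ∀ x ∈ Set.Icc (0:ℝ) T, ∀ s ∈ Set.Ioi r₀,
      ‖(s:ℂ) ^ (-(|k| : ℤ) + 1) * wk x s‖ ≤ r₀ ^ (-(|k| : ℤ) + 1) * C * (1 + s) ^ (-3:ℤ) := by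
    intro x hx s hs
    rw [norm_mul, mul_assoc]
    exact mul_le_mul (hw _ (by omega) s (Set.Ioi_subset_Ici_self hs)) ((hbound x hx s (le_of_lt hs)).2.1)
      (norm_nonneg _) (zpow_nonneg hr₀.le _)
  -- integrability of the basic integrand
  have hFint : ∀ x ∈ Set.Icc (0:ℝ) T,
      IntegrableOn (fun s : ℝ => (s:ℂ) ^ (-(|k| : ℤ) + 1) * wk x s) (Set.Ioi r₀) := by
    intro x hx
    refine aux_intC (r₀ ^ (-(|k| : ℤ) + 1) * C) hr₀ (hmeas x hx) ?_
    intro s hs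
    have := hb1 x hx s hs
    linarith [this]
  set F : ℝ → ℂ := fun x => ∫ s in Set.Ioi r₀, (s:ℂ) ^ (-(|k| : ℤ) + 1) * wk x s with hF
  -- Step I : continuity of F on [0, T]
  have hFcont : ContinuousOn F (Set.Icc 0 T) := by
    apply continuousOn_of_dominated (bound := fun s => r₀ ^ (-(|k| : ℤ) + 1) * C * (1 + s) ^ (-3:ℤ))
    · exact hmeas
    · intro x hx
      exact (ae_restrict_iff' measurableSet_Ioi).2 (ae_of_all _ fun s hs => hb1 x hx s hs)
    · exact (aux_int3 hr₀).const_mul _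
    · refine (ae_restrict_iff' measurableSet_Ioi).2 (ae_of_all _ fun s hs => ?_)
      intro x hx
      exact continuousOn_const.mul ((ht_smooth s (le_of_lt hs)).continuousOn) x hx
  -- Step II : F has zero derivative in the interior
  have hFderiv : ∀ t ∈ Set.Ioo (0:ℝ) T, HasDerivAt F 0 t := by
    intro t htoo
    have ht' : t ∈ Set.Icc (0:ℝ) T := Set.Ioo_subset_Icc_self htoo
    set c : ℂ := if 0 < k then -2*(k:ℂ)*b else 2*(k:ℂ)*a with hcdef
    set v : ℝ → ℝ → ℂ := if 0 < k then wkp1 else wkm1 with hvdef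
    -- smoothness packages
    have hwk2 : ContDiffOn ℝ 2 (wk t) (Set.Ici r₀) := hs_smooth t ht'
    have hwk1 : ContDiffOn ℝ 1 (wk t) (Set.Ici r₀) := hwk2.of_le (by norm_num)
    have hdwf1 : ContDiffOn ℝ 1 (derivWithin (wk t) (Set.Ici r₀)) (Set.Ici r₀) :=
      hwk2.derivWithin (uniqueDiffOn_Ici r₀) (by norm_num)
    have hd2wc : ContinuousOn (derivWithin (derivWithin (wk t) (Set.Ici r₀)) (Set.Ici r₀))
        (Set.Ici r₀) :=
      (hdwf1.derivWithin (m := 0) (uniqueDiffOn_Ici r₀) (by norm_num)).continuousOn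
    have hdmc : ContinuousOn (derivWithin (wkm1 t) (Set.Ici r₀)) (Set.Ici r₀) :=
      ((hs_smooth_m t ht').derivWithin (m := 0) (uniqueDiffOn_Ici r₀) (by norm_num)).continuousOn
    have hdpc : ContinuousOn (derivWithin (wkp1 t) (Set.Ici r₀)) (Set.Ici r₀) :=
      ((hs_smooth_p t ht').derivWithin (m := 0) (uniqueDiffOn_Ici r₀) (by norm_num)).continuousOn
    -- generic HasDerivAt from ContDiffOn 1 on Ici, at interior points
    have hHD : ∀ (f : ℝ → ℂ), ContDiffOn ℝ 1 f (Set.Ici r₀) → ∀ s ∈ Set.Ioi r₀,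
        HasDerivAt f (derivWithin f (Set.Ici r₀) s) s := by
      intro f hf s hs
      have hne : Set.Ici r₀ ∈ nhds s := Ici_mem_nhds hs
      have hd := ((hf.differentiableOn (by norm_num)) s (Set.Ioi_subset_Ici_self hs)).differentiableAt hne
      rw [derivWithin_of_mem_nhds hne]
      exact hd.hasDerivAt
    -- derivative of the complex power weight
    have hz : ∀ (m : ℤ), ∀ s ∈ Set.Ioi r₀,
        HasDerivAt (fun σ : ℝ => (σ:ℂ) ^ m) ((m : ℂ) * (s:ℂ) ^ (m - 1)) s := by
      intro m s hs
      have hsne : (s:ℂ) ≠ 0 := Complex.ofReal_ne_zero.2 (hr₀.trans hs).ne'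
      exact (hasDerivAt_zpow m (s:ℂ) (Or.inl hsne)).comp_ofReal
    -- rewriting `deriv` as `derivWithin` at interior points
    have hEm : ∀ s ∈ Set.Ioi r₀, deriv (wkm1 t) s = derivWithin (wkm1 t) (Set.Ici r₀) s :=
      fun s hs => (derivWithin_of_mem_nhds (Ici_mem_nhds hs)).symm
    have hEp : ∀ s ∈ Set.Ioi r₀, deriv (wkp1 t) s = derivWithin (wkp1 t) (Set.Ici r₀) s :=
      fun s hs => (derivWithin_of_mem_nhds (Ici_mem_nhds hs)).symm
    have hEw : ∀ s ∈ Set.Ioi r₀, deriv (fun σ : ℝ => (σ : ℂ) * deriv (wk t) σ) s =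
        derivWithin (wk t) (Set.Ici r₀) s +
          (s:ℂ) * derivWithin (derivWithin (wk t) (Set.Ici r₀)) (Set.Ici r₀) s := by
      intro s hs
      have hev : (fun σ : ℝ => (σ:ℂ) * deriv (wk t) σ) =ᶠ[nhds s]
          fun σ : ℝ => (σ:ℂ) * derivWithin (wk t) (Set.Ici r₀) σ := by
        filter_upwards [Ioi_mem_nhds hs] with σ hσ
        rw [derivWithin_of_mem_nhds (Ici_mem_nhds hσ)]
      rw [hev.deriv_eq]
      have h1 : HasDerivAt (fun σ : ℝ => ((σ : ℝ) : ℂ)) 1 s := by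
        simpa using (hasDerivAt_id s).ofReal_comp
      rw [(h1.fun_mul (hHD _ hdwf1 s hs)).deriv]
      ring
    -- the auxiliary function Φ and its derivative Φd
    set Φ : ℝ → ℂ := fun s => (s:ℂ) ^ (-(|k| : ℤ) + 1) *
        (derivWithin (wk t) (Set.Ici r₀) s - a * wkm1 t s - b * wkp1 t s)
      + ((|k| : ℤ) : ℂ) * ((s:ℂ) ^ (-(|k| : ℤ)) * wk t s) with hΦdef
    set Φd : ℝ → ℂ := fun s =>
        (((-(|k| : ℤ) + 1 : ℤ) : ℂ) * (s:ℂ) ^ (-(|k| : ℤ) + 1 - 1)) *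
          (derivWithin (wk t) (Set.Ici r₀) s - a * wkm1 t s - b * wkp1 t s)
        + (s:ℂ) ^ (-(|k| : ℤ) + 1) *
          (derivWithin (derivWithin (wk t) (Set.Ici r₀)) (Set.Ici r₀) s
            - a * derivWithin (wkm1 t) (Set.Ici r₀) s
            - b * derivWithin (wkp1 t) (Set.Ici r₀) s)
        + ((|k| : ℤ) : ℂ) * ((((-(|k| : ℤ)) : ℤ) : ℂ) * (s:ℂ) ^ (-(|k| : ℤ) - 1) * wk t s
            + (s:ℂ) ^ (-(|k| : ℤ)) * derivWithin (wk t) (Set.Ici r₀) s) with hΦddef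
    have hΦ_hd : ∀ s ∈ Set.Ioi r₀, HasDerivAt Φ (Φd s) s := by
      intro s hs
      have h1 := (hz (-(|k| : ℤ) + 1) s hs).fun_mul
        (((hHD _ hdwf1 s hs).fun_sub ((hHD _ (hs_smooth_m t ht') s hs).const_mul a)).fun_sub
          ((hHD _ (hs_smooth_p t ht') s hs).const_mul b))
      have h2 := ((hz (-(|k| : ℤ)) s hs).fun_mul (hHD _ hwk1 s hs)).const_mul ((|k| : ℤ) : ℂ)
      have h3 := h1.fun_add h2
      rw [hΦdef, hΦddef]
      convert h3 using 1 <;> ring_nf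
    -- value at r₀ vanishes by the Robin boundary condition
    have hΦr₀ : Φ r₀ = 0 := by
      have hrne : (r₀:ℂ) ≠ 0 := Complex.ofReal_ne_zero.2 hr₀.ne'
      have e1 : (r₀:ℂ) ^ (-(|k| : ℤ) + 1) = (r₀:ℂ) ^ (-(|k| : ℤ)) * r₀ :=
        zpow_add_one₀ hrne _
      have hrob := robin t ht'
      simp only [hΦdef]
      rw [e1]
      linear_combination ((r₀:ℂ) ^ (-(|k| : ℤ))) * hrob
    -- limit at infinity vanishes
    have hΦtend : Filter.Tendsto Φ Filter.atTop (nhds 0) := by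
      set K2 : ℝ := r₀ ^ (-(|k| : ℤ) + 1) * (1 + ‖a‖ + ‖b‖)
        + ((|k| : ℤ) : ℝ) * r₀ ^ (-(|k| : ℤ)) with hK2
      have hboundΦ : ∀ s ∈ Set.Ici r₀, ‖Φ s‖ ≤ K2 * (C * (1 + s) ^ (-3:ℤ)) := by
        intro s hs
        obtain ⟨hm1, hm2, hm3⟩ := hbound t ht' s hs
        obtain ⟨hd1, hd2, hd3⟩ := hbound' t ht' s hs
        have hB : (0:ℝ) ≤ C * (1 + s)^(-3:ℤ) := le_trans (norm_nonneg _) hm2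
        have hz1 : ‖(s:ℂ) ^ (-(|k| : ℤ) + 1)‖ ≤ r₀ ^ (-(|k| : ℤ) + 1) := hw _ (by omega) s hs
        have hz2 : ‖(s:ℂ) ^ (-(|k| : ℤ))‖ ≤ r₀ ^ (-(|k| : ℤ)) := hw _ (by omega) s hs
        have hu : ‖derivWithin (wk t) (Set.Ici r₀) s - a * wkm1 t s - b * wkp1 t s‖ ≤
            (1 + ‖a‖ + ‖b‖) * (C * (1 + s) ^ (-3:ℤ)) := by
          have t1 := norm_sub_le (derivWithin (wk t) (Set.Ici r₀) s - a * wkm1 t s) (b * wkp1 t s)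
          have t2 := norm_sub_le (derivWithin (wk t) (Set.Ici r₀) s) (a * wkm1 t s)
          rw [norm_mul] at t1 t2
          have t3 := mul_le_mul_of_nonneg_left hm1 (norm_nonneg a)
          have t4 := mul_le_mul_of_nonneg_left hm3 (norm_nonneg b)
          nlinarith [norm_nonneg a, norm_nonneg b]
        have hNn : (0:ℝ) ≤ ((|k| : ℤ) : ℝ) := by positivity
        have hnormN : ‖(((|k| : ℤ)) : ℂ)‖ = ((|k| : ℤ) : ℝ) := by
          rw [Complex.norm_intCast]
          exact _root_.abs_of_nonneg hNn
        calc ‖Φ s‖ ≤ ‖(s:ℂ) ^ (-(|k| : ℤ) + 1) *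
              (derivWithin (wk t) (Set.Ici r₀) s - a * wkm1 t s - b * wkp1 t s)‖
            + ‖((|k| : ℤ) : ℂ) * ((s:ℂ) ^ (-(|k| : ℤ)) * wk t s)‖ := by
              simp only [hΦdef]; exact norm_add_le _ _
        _ ≤ r₀ ^ (-(|k| : ℤ) + 1) * ((1 + ‖a‖ + ‖b‖) * (C * (1 + s) ^ (-3:ℤ)))
            + ((|k| : ℤ) : ℝ) * (r₀ ^ (-(|k| : ℤ)) * (C * (1 + s) ^ (-3:ℤ))) := by
              rw [norm_mul, norm_mul, norm_mul, hnormN]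
              have u1 : ‖(s:ℂ) ^ (-(|k| : ℤ))‖ * ‖wk t s‖ ≤
                  r₀ ^ (-(|k| : ℤ)) * (C * (1 + s) ^ (-3:ℤ)) :=
                mul_le_mul hz2 hm2 (norm_nonneg _) (zpow_nonneg hr₀.le _)
              have u2 := mul_le_mul hz1 hu (norm_nonneg _) (zpow_nonneg hr₀.le _)
              have u3 := mul_le_mul_of_nonneg_left u1 hNn
              linarith
        _ = K2 * (C * (1 + s) ^ (-3:ℤ)) := by rw [hK2]; ring
      have h0 : Filter.Tendsto (fun s : ℝ => K2 * (C * (1 + s) ^ (-3:ℤ)))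
          Filter.atTop (nhds 0) := by
        have h1 : Filter.Tendsto (fun s : ℝ => 1 + s) Filter.atTop Filter.atTop :=
          Filter.tendsto_atTop_add_const_left _ 1 Filter.tendsto_id
        have h2 := (tendsto_zpow_atTop_zero (show (-3:ℤ) < 0 by norm_num)).comp h1
        have h3 := h2.const_mul (K2 * C)
        simp only [Function.comp, mul_zero] at h3 ⊢
        convert h3 using 2
        ring
      refine squeeze_zero_norm' ?_ h0
      filter_upwards [Filter.eventually_ge_atTop r₀] with s hs
      exact hboundΦ s hs
    -- continuity of Φ on [r₀, ∞)
    have hΦcont : ContinuousOn Φ (Set.Ici r₀) := by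
      simp only [hΦdef]
      exact ((hzc _).mul ((hdwf1.continuousOn.sub
          (continuousOn_const.mul (hs_smooth_m t ht').continuousOn)).sub
          (continuousOn_const.mul (hs_smooth_p t ht').continuousOn))).add
        (continuousOn_const.mul ((hzc _).mul hwk2.continuousOn))
    -- continuity of Φd on [r₀, ∞)
    have hΦdcont : ContinuousOn Φd (Set.Ici r₀) := by
      simp only [hΦddef]
      exact (((continuousOn_const.mul (hzc _)).mul ((hdwf1.continuousOn.sub
          (continuousOn_const.mul (hs_smooth_m t ht').continuousOn)).sub
          (continuousOn_const.mul (hs_smooth_p t ht').continuousOn))).add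
        ((hzc _).mul ((hd2wc.sub (continuousOn_const.mul hdmc)).sub
          (continuousOn_const.mul hdpc)))).add
        (continuousOn_const.mul (((continuousOn_const.mul (hzc _)).mul hwk2.continuousOn).add
          ((hzc _).mul hdwf1.continuousOn)))
    -- properties of v
    have hvcont : ContinuousOn (v t) (Set.Ici r₀) := by
      rw [hvdef]
      split_ifs
      · exact (hs_smooth_p t ht').continuousOn
      · exact (hs_smooth_m t ht').continuousOn
    have hvbound : ∀ s ∈ Set.Ici r₀, ‖v t s‖ ≤ C * (1 + s) ^ (-3:ℤ) := by
      intro s hs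
      rw [hvdef]
      split_ifs
      · exact (hbound t ht' s hs).2.2
      · exact (hbound t ht' s hs).1
    -- integrability of the moment integrand
    have hg_int : IntegrableOn (fun s : ℝ => (s:ℂ) ^ (-(|k| : ℤ)) * v t s) (Set.Ioi r₀) := by
      refine aux_intC (r₀ ^ (-(|k| : ℤ)) * C) hr₀
        ((((hzc _).mul hvcont).mono Ioi_subset_Ici_self).aestronglyMeasurable
          measurableSet_Ioi) ?_
      intro s hs
      rw [norm_mul, mul_assoc]
      exact mul_le_mul (hw _ (by omega) s (Set.Ioi_subset_Ici_self hs)) (hvbound s (Set.Ioi_subset_Ici_self hs))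
        (norm_nonneg _) (zpow_nonneg hr₀.le _)
    -- the key pointwise identity from the PDE
    have hkey : ∀ s ∈ Set.Ioi r₀,
        (s:ℂ) ^ (-(|k| : ℤ) + 1) * derivWithin (fun τ => wk τ s) (Set.Icc 0 T) t =
        Φd s + c * ((s:ℂ) ^ (-(|k| : ℤ)) * v t s) := by
      intro s hs
      have hs0 : (0:ℝ) < s := hr₀.trans hs
      have hsne : (s:ℂ) ≠ 0 := Complex.ofReal_ne_zero.2 hs0.ne'
      rw [pde t ht' s hs, hEw s hs, hEm s hs, hEp s hs]
      simp only [hΦddef, hcdef, hvdef]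
      rcases lt_or_ge 0 k with hkp | hkn
      · rw [if_pos hkp, if_pos hkp, abs_of_pos hkp]
        rw [show (-k + 1 - 1 : ℤ) = -k from by ring,
          zpow_add_one₀ hsne (-k), zpow_sub_one₀ hsne (-k)]
        generalize (s:ℂ) ^ (-k : ℤ) = P
        push_cast
        field_simp
        ring
      · have hklt : k < 0 := lt_of_le_of_ne hkn hk
        rw [if_neg (by omega : ¬ 0 < k), if_neg (by omega : ¬ 0 < k), abs_of_neg hklt]
        simp only [neg_neg]
        rw [show (k + 1 - 1 : ℤ) = k from by ring,
          zpow_add_one₀ hsne k, zpow_sub_one₀ hsne k]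
        generalize (s:ℂ) ^ (k : ℤ) = P
        push_cast
        field_simp
        ring
    -- differentiation under the integral sign
    obtain ⟨ε, hεpos, hεball⟩ := Metric.isOpen_iff.1 isOpen_Ioo t htoo
    have hdom := hasDerivAt_integral_of_dominated_loc_of_deriv_le
      (μ := volume.restrict (Set.Ioi r₀))
      (F := fun x s => (s:ℂ) ^ (-(|k| : ℤ) + 1) * wk x s)
      (F' := fun x s => (s:ℂ) ^ (-(|k| : ℤ) + 1) * derivWithin (fun τ => wk τ s) (Set.Icc 0 T) x)
      (bound := fun s => r₀ ^ (-(|k| : ℤ) + 1) * C * (1 + s) ^ (-3:ℤ))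
      (Metric.ball_mem_nhds t hεpos) ?_ (hFint t ht') ?_ ?_ ((aux_int3 hr₀).const_mul _) ?_
    · -- use the conclusion
      have hAint : IntegrableOn (fun s : ℝ => (s:ℂ) ^ (-(|k| : ℤ) + 1) *
          derivWithin (fun τ => wk τ s) (Set.Icc 0 T) t) (Set.Ioi r₀) := hdom.1
      have hΦdint : IntegrableOn Φd (Set.Ioi r₀) := by
        refine MeasureTheory.IntegrableOn.congr_fun (hAint.sub (hg_int.const_mul c))
          (fun s hs => ?_) measurableSet_Ioi
        simp only [Pi.sub_apply]
        linear_combination hkey s hs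
      have hFTC := integral_Ioi_of_hasDerivAt_of_tendsto (hΦcont r₀ Set.self_mem_Ici)
        hΦ_hd hΦdint hΦtend
      have hmom := moment t ht'
      have hintzero : (∫ s in Set.Ioi r₀, (s:ℂ) ^ (-(|k| : ℤ) + 1) *
          derivWithin (fun τ => wk τ s) (Set.Icc 0 T) t) = 0 := by
        rw [setIntegral_congr_fun measurableSet_Ioi (fun s hs => hkey s hs),
          integral_add hΦdint (hg_int.const_mul c), integral_const_mul, hFTC, hΦr₀, hmom]
        ring
      have hfinal := hdom.2
      rw [hintzero] at hfinal
      rw [hF]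
      exact hfinal
    · -- measurability of F x near t
      filter_upwards [isOpen_Ioo.mem_nhds htoo] with x hx
      exact hmeas x (Set.Ioo_subset_Icc_self hx)
    · -- measurability of F' t
      have hgm : AEStronglyMeasurable (fun s : ℝ => Φd s + c * ((s:ℂ) ^ (-(|k| : ℤ)) * v t s))
          (volume.restrict (Set.Ioi r₀)) :=
        (((hΦdcont.add (continuousOn_const.mul ((hzc _).mul hvcont))).mono
          Ioi_subset_Ici_self).aestronglyMeasurable measurableSet_Ioi)
      exact hgm.congr ((ae_restrict_iff' measurableSet_Ioi).2
        (ae_of_all _ fun s hs => (hkey s hs).symm))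
    · -- the bound
      refine (ae_restrict_iff' measurableSet_Ioi).2 (ae_of_all _ fun s hs => fun x hx => ?_)
      have hx' : x ∈ Set.Icc (0:ℝ) T := Set.Ioo_subset_Icc_self (hεball hx)
      have hmm : ‖(s:ℂ) ^ (-(|k| : ℤ) + 1)‖ * ‖derivWithin (fun τ => wk τ s) (Set.Icc 0 T) x‖ ≤
          r₀ ^ (-(|k| : ℤ) + 1) * (C * (1 + s) ^ (-3:ℤ)) :=
        mul_le_mul (hw _ (by omega) s (Set.Ioi_subset_Ici_self hs)) (hdt_bound x hx' s (le_of_lt hs))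
          (norm_nonneg _) (zpow_nonneg hr₀.le _)
      calc ‖(s:ℂ) ^ (-(|k| : ℤ) + 1) * derivWithin (fun τ => wk τ s) (Set.Icc 0 T) x‖
          = ‖(s:ℂ) ^ (-(|k| : ℤ) + 1)‖ * ‖derivWithin (fun τ => wk τ s) (Set.Icc 0 T) x‖ :=
            norm_mul _ _
        _ ≤ r₀ ^ (-(|k| : ℤ) + 1) * (C * (1 + s) ^ (-3:ℤ)) := hmm
        _ = r₀ ^ (-(|k| : ℤ) + 1) * C * (1 + s) ^ (-3:ℤ) := by ring
    · -- differentiability in t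
      refine (ae_restrict_iff' measurableSet_Ioi).2 (ae_of_all _ fun s hs => fun x hx => ?_)
      have hx' : x ∈ Set.Ioo (0:ℝ) T := hεball hx
      have hIcc : Set.Icc (0:ℝ) T ∈ nhds x := Icc_mem_nhds hx'.1 hx'.2
      have hd := (((ht_smooth s (le_of_lt hs)).differentiableOn (by norm_num)) x
        (Set.Ioo_subset_Icc_self hx')).differentiableAt hIcc
      show HasDerivAt (fun y => (s:ℂ) ^ (-(|k| : ℤ) + 1) * wk y s)
        ((s:ℂ) ^ (-(|k| : ℤ) + 1) * derivWithin (fun τ => wk τ s) (Set.Icc 0 T) x) x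
      rw [derivWithin_of_mem_nhds hIcc]
      exact hd.hasDerivAt.const_mul _
  -- Step III : conclude
  intro t ht
  show F t = F 0
  rcases ht.1.eq_or_lt with h0 | h0
  · rw [← h0]
  · have hconst : ∀ ε, 0 < ε → ε ≤ t → F t = F ε := by
      intro ε hε hεt
      have hder : ∀ x ∈ Set.Ico ε t, HasDerivWithinAt F 0 (Set.Ici x) x := fun x hx =>
        (hFderiv x ⟨lt_of_lt_of_le hε hx.1, lt_of_lt_of_le hx.2 ht.2⟩).hasDerivWithinAt
      have hcm : ContinuousOn F (Set.Icc ε t) :=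
        hFcont.mono (Set.Icc_subset_Icc hε.le ht.2)
      exact constant_of_has_deriv_right_zero hcm hder t (Set.right_mem_Icc.2 hεt)
    have htend : Filter.Tendsto F (nhdsWithin 0 (Set.Ioi 0)) (nhds (F 0)) := by
      refine (hFcont 0 (Set.left_mem_Icc.2 hT.le)).mono_left (nhdsWithin_le_of_mem ?_)
      exact Filter.mem_of_superset (Ioc_mem_nhdsGT_of_mem ⟨le_refl _, hT⟩) Set.Ioc_subset_Icc_self
    have hev : F =ᶠ[nhdsWithin 0 (Set.Ioi 0)] fun _ => F t := by
      filter_upwards [Ioc_mem_nhdsGT_of_mem ⟨le_refl (0:ℝ), h0⟩] with ε hε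
      exact (hconst ε hε.1 hε.2).symm
    exact (tendsto_nhds_unique tendsto_const_nhds ((Filter.tendsto_congr' hev).1 htend))
end

section
/- Fix r₀ > 0, k ∈ ℤ, σ = sign(k) (σ = 0 when k = 0). Let q_k, r_k : [r₀,∞) → ℂ be continuous with ∫_{r₀}^∞ s(|q_k(s)| + |r_k(s)|) ds < ∞, and let v∞r, v∞φ ∈ ℂ satisfy either (|k| = 1 and v∞φ = i k v∞r) or (v∞r = v∞φ = 0). With v_r and v_φ defined by v_r(r) = σ (i r^{-|k|-1}/2) ∫_{r₀}^r s^{|k|+1}( q_k(s) − iσ r_k(s) ) ds + σ (i r^{|k|-1}/2) ∫_r^∞ s^{-|k|+1}( q_k(s) + iσ r_k(s) ) ds + v∞r and v_φ(r) = (r^{-|k|-1}/2) ∫_{r₀}^r s^{|k|+1}( q_k(s) − iσ r_k(s) ) ds − (r^{|k|-1}/2) ∫_r^∞ s^{-|k|+1}( q_k(s) + iσ r_k(s) ) ds + v∞φ, one has: v_r(r₀) = 0 and v_φ(r₀) = 0 if and only if r₀^{|k|-1} ∫_{r₀}^∞ s^{-|k|+1} ( q_k(s) + iσ r_k(s) )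 ds = 2 v∞φ. -/
open MeasureTheory Set Complex

/-- no-slip condition as a moment relation, general exterior domain
transported to the exterior of the disc of radius `r₀`. With the Biot–Savart formulas
for `v_r, v_φ` built from the source coefficients `q` and `rr`, one has
`v_r(r₀) = 0 ∧ v_φ(r₀) = 0` if and only if
`r₀^{|k|-1} ∫_{r₀}^∞ s^{-|k|+1} (q(s) + iσ rr(s)) ds = 2 vIφ`. -/
theorem stmt9 (r₀ : ℝ) (hr₀ : 0 < r₀) (k : ℤ) (q rr : ℝ → ℂ)
    (hq_cont : ContinuousOn q (Set.Ici r₀)) (hr_cont : ContinuousOn rr (Set.Ici r₀))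
    (h_int : IntegrableOn (fun s : ℝ => s * (‖q s‖ + ‖rr s‖)) (Set.Ioi r₀))
    (vIr vIφ : ℂ)
    (hvI : (|k| = 1 ∧ vIφ = Complex.I * (k : ℂ) * vIr) ∨ (vIr = 0 ∧ vIφ = 0))
    (vr vφ : ℝ → ℂ)
    (hvr : ∀ r ≥ r₀, vr r =
      (Int.sign k : ℂ) * (Complex.I * (r : ℂ) ^ (-(|k| : ℤ) - 1) / 2) *
        (∫ s in Set.Ioc r₀ r, (s : ℂ) ^ ((|k| : ℤ) + 1) *
          (q s - Complex.I * (Int.sign k : ℂ) * rr s))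
      + (Int.sign k : ℂ) * (Complex.I * (r : ℂ) ^ ((|k| : ℤ) - 1) / 2) *
        (∫ s in Set.Ioi r, (s : ℂ) ^ (-(|k| : ℤ) + 1) *
          (q s + Complex.I * (Int.sign k : ℂ) * rr s))
      + vIr)
    (hvφ : ∀ r ≥ r₀, vφ r =
      ((r : ℂ) ^ (-(|k| : ℤ) - 1) / 2) *
        (∫ s in Set.Ioc r₀ r, (s : ℂ) ^ ((|k| : ℤ) + 1) *
          (q s - Complex.I * (Int.sign k : ℂ) * rr s))
      - ((r : ℂ) ^ ((|k| : ℤ) - 1) / 2) *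
        (∫ s in Set.Ioi r, (s : ℂ) ^ (-(|k| : ℤ) + 1) *
          (q s + Complex.I * (Int.sign k : ℂ) * rr s))
      + vIφ) :
    (vr r₀ = 0 ∧ vφ r₀ = 0) ↔
      (r₀ : ℂ) ^ ((|k| : ℤ) - 1) *
        (∫ s in Set.Ioi r₀, (s : ℂ) ^ (-(|k| : ℤ) + 1) *
          (q s + Complex.I * (Int.sign k : ℂ) * rr s)) = 2 * vIφ := by

  have h1 := hvr r₀ le_rfl
  have h2 := hvφ r₀ le_rfl
  rw [Set.Ioc_self, Measure.restrict_empty, integral_zero_measure] at h1 h2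
  set J := ∫ s in Set.Ioi r₀, (s : ℂ) ^ (-(|k| : ℤ) + 1) *
      (q s + Complex.I * (Int.sign k : ℂ) * rr s) with hJ
  set A : ℂ := (r₀ : ℂ) ^ ((|k| : ℤ) - 1) with hA
  have hAne : A ≠ 0 := zpow_ne_zero _ (by exact_mod_cast hr₀.ne')
  constructor
  · rintro ⟨_, hφ0⟩
    rw [h2] at hφ0
    linear_combination (-2 : ℂ) * hφ0
  · intro h
    constructor
    · rw [h1]
      rcases hvI with ⟨hk1, hφ⟩ | ⟨hr0, hφ0⟩
      · rcases abs_eq (by norm_num : (0:ℤ) ≤ 1) |>.mp hk1 with hk | hk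
        · subst hk
          simp only [Int.sign_one, Int.cast_one] at *
          push_cast at hφ
          linear_combination Complex.I / 2 * h + Complex.I * hφ + vIr * Complex.I_sq
        · subst hk
          norm_num at *
          linear_combination -Complex.I / 2 * h - Complex.I * hφ + vIr * Complex.I_sq
      · have hJ0 : J = 0 := by
          have := h
          rw [hφ0, mul_zero] at this
          exact (mul_eq_zero.mp this).resolve_left hAne
        rw [hJ0, hr0]
        ring
    · rw [h2]
      linear_combination (-1 / 2 : ℂ) * h
end

section
/- Let r₀ > 0, T > 0, k ∈ ℕ. Let (c_n)_{n≥0} be complex numbers with Σ_{n≥0} |c_n| r₀^{-n} < ∞, and define h(z) = Σ_{n≥0} c_n z^{-n} for |z| ≥ r₀ (the series converges absolutely there). Let w : [0,T] × {x ∈ ℝ² : |x| > r₀} → ℂ be measurable with |w(t,x)| ≤ W(x) for some integrable W on {|x| > r₀}. Suppose that for every integer n ≥ 0 the function t ↦ ∫_{|x|>r₀} conj(h(x₁+ix₂)) (x₁+ix₂)^{-(n+k)} w(t,x) dx is constant on [0,T]. Then the function t ↦ ∫_{|x|>r₀} |h(x₁+ix₂)|² (x₁+ix₂)^{-k} w(t,x)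 dx is also constant on [0,T]. -/
open MeasureTheory Set Complex

/-- The Euclidean norm of a point of `ℝ × ℝ`. -/
noncomputable def enorm2 (x : ℝ × ℝ) : ℝ := Real.sqrt (x.1 ^ 2 + x.2 ^ 2)

private lemma zpow_anti_aux {r R : ℝ} (hr : 0 < r) (hle : r ≤ R) (m : ℕ) :
    R ^ (-(m : ℤ)) ≤ r ^ (-(m : ℤ)) := by
  rw [zpow_neg, zpow_neg, zpow_natCast, zpow_natCast]
  exact inv_anti₀ (pow_pos hr m) (pow_le_pow_left₀ hr.le hle m)

/-- series-interchange step for general exterior domains. If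
`h(z) = Σ_{n≥0} c_n z^{-n}` with `Σ |c_n| r₀^{-n} < ∞`, `w(t,·)` is measurable and
dominated by an integrable `W` on `{|x| > r₀}`, and every moment
`t ↦ ∫ conj(h(z)) z^{-(n+k)} w(t,x) dx` is constant on `[0,T]`, then
`t ↦ ∫ |h(z)|² z^{-k} w(t,x) dx` is constant on `[0,T]`. -/
theorem stmt10 (r₀ T : ℝ) (hr₀ : 0 < r₀) (hT : 0 < T) (k : ℕ)
    (c : ℕ → ℂ) (hc : Summable fun n : ℕ => ‖c n‖ * r₀ ^ (-(n : ℤ)))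
    (h : ℂ → ℂ)
    (hh : ∀ z : ℂ, r₀ ≤ ‖z‖ → h z = ∑' n : ℕ, c n * z ^ (-(n : ℤ)))
    (w : ℝ → ℝ × ℝ → ℂ)
    (hw_meas : ∀ t ∈ Set.Icc (0 : ℝ) T, Measurable (w t))
    (W : ℝ × ℝ → ℝ)
    (hW : IntegrableOn W {x : ℝ × ℝ | r₀ < enorm2 x})
    (hw_bound : ∀ t ∈ Set.Icc (0 : ℝ) T, ∀ x : ℝ × ℝ, r₀ < enorm2 x →
      ‖w t x‖ ≤ W x)
    (hmom : ∀ n : ℕ, ∀ t ∈ Set.Icc (0 : ℝ) T,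
      (∫ x in {x : ℝ × ℝ | r₀ < enorm2 x},
        (starRingEnd ℂ) (h (x.1 + Complex.I * x.2)) *
          (x.1 + Complex.I * x.2) ^ (-(n : ℤ) - (k : ℤ)) * w t x) =
      (∫ x in {x : ℝ × ℝ | r₀ < enorm2 x},
        (starRingEnd ℂ) (h (x.1 + Complex.I * x.2)) *
          (x.1 + Complex.I * x.2) ^ (-(n : ℤ) - (k : ℤ)) * w 0 x)) :
    ∀ t ∈ Set.Icc (0 : ℝ) T,
      (∫ x in {x : ℝ × ℝ | r₀ < enorm2 x},
        (((‖h (x.1 + Complex.I * x.2)‖ : ℝ) : ℂ)) ^ 2 *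
          (x.1 + Complex.I * x.2) ^ (-(k : ℤ)) * w t x) =
      (∫ x in {x : ℝ × ℝ | r₀ < enorm2 x},
        (((‖h (x.1 + Complex.I * x.2)‖ : ℝ) : ℂ)) ^ 2 *
          (x.1 + Complex.I * x.2) ^ (-(k : ℤ)) * w 0 x) := by
  intro t ht
  have h0T : (0 : ℝ) ∈ Set.Icc (0 : ℝ) T := ⟨le_refl 0, hT.le⟩
  set z : ℝ × ℝ → ℂ := fun x => (x.1 : ℂ) + Complex.I * x.2 with hzdef
  have hzc : Continuous z :=
    (Complex.continuous_ofReal.comp continuous_fst).add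
      (continuous_const.mul (Complex.continuous_ofReal.comp continuous_snd))
  have habs : ∀ x : ℝ × ℝ, ‖z x‖ = enorm2 x := by
    intro x
    rw [Complex.norm_def, enorm2]
    congr 1
    simp [Complex.normSq_apply, hzdef]
    ring
  set S := {x : ℝ × ℝ | r₀ < enorm2 x} with hSdef
  have hSm : MeasurableSet S := by
    have : Continuous enorm2 :=
      Real.continuous_sqrt.comp ((continuous_fst.pow 2).add (continuous_snd.pow 2))
    exact measurableSet_lt measurable_const this.measurable
  have hrS : ∀ x ∈ S, r₀ ≤ ‖z x‖ := by
    intro x hx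
    rw [habs x]; exact le_of_lt hx
  have hz0 : ∀ x ∈ S, z x ≠ 0 := by
    intro x hx hzz
    have := hrS x hx
    rw [hzz] at this
    simp at this
    exact absurd this (not_le.mpr hr₀)
  set M : ℝ := ∑' n : ℕ, ‖c n‖ * r₀ ^ (-(n : ℤ)) with hMdef
  have hM0 : 0 ≤ M := tsum_nonneg fun n =>
    mul_nonneg (norm_nonneg _) (zpow_nonneg hr₀.le _)
  have hterm : ∀ (ζ : ℂ), r₀ ≤ ‖ζ‖ → ∀ n : ℕ,
      ‖c n * ζ ^ (-(n : ℤ))‖ ≤ ‖c n‖ * r₀ ^ (-(n : ℤ)) := by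
    intro ζ hζ n
    rw [norm_mul, norm_zpow]
    exact mul_le_mul_of_nonneg_left
      (by exact zpow_anti_aux hr₀ hζ n) (norm_nonneg _)
  have hsumnorm : ∀ (ζ : ℂ), r₀ ≤ ‖ζ‖ →
      Summable fun n : ℕ => ‖c n * ζ ^ (-(n : ℤ))‖ := fun ζ hζ =>
    Summable.of_nonneg_of_le (fun n => norm_nonneg _) (hterm ζ hζ) hc
  have hsumz : ∀ (ζ : ℂ), r₀ ≤ ‖ζ‖ →
      Summable fun n : ℕ => c n * ζ ^ (-(n : ℤ)) := fun ζ hζ =>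
    (hsumnorm ζ hζ).of_norm
  have hM : ∀ (ζ : ℂ), r₀ ≤ ‖ζ‖ → ‖h ζ‖ ≤ M := by
    intro ζ hζ
    rw [hh ζ hζ]
    calc ‖∑' n : ℕ, c n * ζ ^ (-(n : ℤ))‖
        ≤ ∑' n : ℕ, ‖c n * ζ ^ (-(n : ℤ))‖ := norm_tsum_le_tsum_norm (hsumnorm ζ hζ)
      _ ≤ M := Summable.tsum_le_tsum (hterm ζ hζ) (hsumnorm ζ hζ) hc
  -- the key identity, for any time s in [0,T]
  suffices key : ∀ s ∈ Set.Icc (0 : ℝ) T,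
      (∫ x in S, (((‖h (z x)‖ : ℝ) : ℂ)) ^ 2 * (z x) ^ (-(k : ℤ)) * w s x) =
      ∑' n : ℕ, c n * ∫ x in S,
        (starRingEnd ℂ) (h (z x)) * (z x) ^ (-(n : ℤ) - (k : ℤ)) * w s x by
    rw [key t ht, key 0 h0T]
    exact tsum_congr fun n => by rw [hmom n t ht]
  intro s hs
  set f : ℕ → ℝ × ℝ → ℂ := fun n x =>
    c n * ((starRingEnd ℂ) (h (z x)) * (z x) ^ (-(n : ℤ) - (k : ℤ)) * w s x) with hfdef
  -- pointwise identity on S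
  have hEq : EqOn (fun x => (((‖h (z x)‖ : ℝ) : ℂ)) ^ 2 * (z x) ^ (-(k : ℤ)) * w s x)
      (fun x => ∑' n : ℕ, f n x) S := by
    intro x hx
    have hr : r₀ ≤ ‖z x‖ := hrS x hx
    have hne : z x ≠ 0 := hz0 x hx
    have step : ∀ n : ℕ, f n x = (c n * (z x) ^ (-(n : ℤ))) *
        ((starRingEnd ℂ) (h (z x)) * (z x) ^ (-(k : ℤ)) * w s x) := by
      intro n
      have : (z x) ^ (-(n : ℤ) - (k : ℤ)) = (z x) ^ (-(n : ℤ)) * (z x) ^ (-(k : ℤ)) := by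
        rw [← zpow_add₀ hne]; ring_nf
      simp only [hfdef, this]; ring
    calc (((‖h (z x)‖ : ℝ) : ℂ)) ^ 2 * (z x) ^ (-(k : ℤ)) * w s x
        = h (z x) * ((starRingEnd ℂ) (h (z x)) * (z x) ^ (-(k : ℤ)) * w s x) := by
          rw [show (((‖h (z x)‖ : ℝ) : ℂ)) ^ 2 = h (z x) * (starRingEnd ℂ) (h (z x)) by
            rw [← Complex.ofReal_pow, Complex.sq_norm, Complex.mul_conj]]
          ring
      _ = (∑' n : ℕ, c n * (z x) ^ (-(n : ℤ))) *
            ((starRingEnd ℂ) (h (z x)) * (z x) ^ (-(k : ℤ)) * w s x) := by rw [← hh _ hr]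
      _ = ∑' n : ℕ, (c n * (z x) ^ (-(n : ℤ))) *
            ((starRingEnd ℂ) (h (z x)) * (z x) ^ (-(k : ℤ)) * w s x) := (tsum_mul_right).symm
      _ = ∑' n : ℕ, f n x := tsum_congr fun n => (step n).symm
  -- measurability of x ↦ h (z x) on S
  have hzm : Measurable z := hzc.measurable
  have hzpm : ∀ m : ℤ, Measurable fun x => (z x) ^ m := by
    intro m
    rcases m with m | m
    · simpa using (hzm.pow_const m)
    · simp only [zpow_negSucc]
      exact (hzm.pow_const (m + 1)).inv
  have hhm : AEStronglyMeasurable (fun x => h (z x)) (volume.restrict S) := by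
    apply aestronglyMeasurable_of_tendsto_ae (u := Filter.atTop)
      (f := fun N x => ∑ n ∈ Finset.range N, c n * (z x) ^ (-(n : ℤ)))
    · intro N
      exact (Finset.measurable_sum (Finset.range N) fun (n : ℕ) _ =>
        (measurable_const.mul (hzpm (-(n : ℤ))) :
          Measurable fun x => c n * (z x) ^ (-(n : ℤ)))).aestronglyMeasurable
    · filter_upwards [ae_restrict_mem hSm] with x hx
      rw [hh _ (hrS x hx)]
      exact (hsumz _ (hrS x hx)).hasSum.tendsto_sum_nat
  have haem : ∀ n : ℕ, AEStronglyMeasurable (f n) (volume.restrict S) := by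
    intro n
    exact aestronglyMeasurable_const.mul
      (((Complex.continuous_conj.comp_aestronglyMeasurable hhm).mul
        (hzpm (-(n : ℤ) - (k : ℤ))).aestronglyMeasurable).mul
        (hw_meas s hs).aestronglyMeasurable)
  -- bound
  set K : ℕ → ℝ := fun n => ‖c n‖ * r₀ ^ (-(n : ℤ)) * (M * r₀ ^ (-(k : ℤ))) with hKdef
  have hbound : ∀ n : ℕ, ∀ x ∈ S, ‖f n x‖ ≤ K n * W x := by
    intro n x hx
    have hr : r₀ ≤ ‖z x‖ := hrS x hx
    have h1 : ‖(starRingEnd ℂ) (h (z x))‖ ≤ M := by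
      rw [RCLike.norm_conj]; exact hM _ hr
    have h2 : ‖(z x) ^ (-(n : ℤ) - (k : ℤ))‖ ≤ r₀ ^ (-(n : ℤ)) * r₀ ^ (-(k : ℤ)) := by
      rw [norm_zpow, show (-(n : ℤ) - (k : ℤ)) = -(n : ℤ) + -(k : ℤ) by ring,
        zpow_add₀ (by exact ne_of_gt (lt_of_lt_of_le hr₀ hr))]
      exact mul_le_mul (zpow_anti_aux hr₀ hr n) (zpow_anti_aux hr₀ hr k)
        (zpow_nonneg (norm_nonneg _) _) (zpow_nonneg hr₀.le _)
    have h3 : ‖w s x‖ ≤ W x := hw_bound s hs x hx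
    have hW0 : 0 ≤ W x := le_trans (norm_nonneg _) h3
    calc ‖f n x‖ = ‖c n‖ * (‖(starRingEnd ℂ) (h (z x))‖ *
          (‖(z x) ^ (-(n : ℤ) - (k : ℤ))‖ * ‖w s x‖)) := by
          simp only [hfdef, norm_mul]; ring
      _ ≤ ‖c n‖ * (M * ((r₀ ^ (-(n : ℤ)) * r₀ ^ (-(k : ℤ))) * W x)) := by
          refine mul_le_mul_of_nonneg_left ?_ (norm_nonneg _)
          refine mul_le_mul h1 ?_ (mul_nonneg (norm_nonneg _) (norm_nonneg _)) hM0
          exact mul_le_mul h2 h3 (norm_nonneg _)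
            (mul_nonneg (zpow_nonneg hr₀.le _) (zpow_nonneg hr₀.le _))
      _ = K n * W x := by simp only [hKdef]; ring
  have hWint : ∀ n : ℕ, Integrable (fun x => K n * W x) (volume.restrict S) :=
    fun n => hW.const_mul (K n)
  have hint : ∀ n : ℕ, Integrable (f n) (volume.restrict S) := by
    intro n
    refine Integrable.mono' (hWint n) (haem n) ?_
    filter_upwards [ae_restrict_mem hSm] with x hx using hbound n x hx
  have hsumint : Summable fun n : ℕ => ∫ x in S, ‖f n x‖ := by
    apply Summable.of_nonneg_of_le
      (fun n => integral_nonneg fun x => norm_nonneg _)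
      (fun n => ?_) (hc.mul_right (M * r₀ ^ (-(k : ℤ)) * ∫ x in S, W x))
    have : (∫ x in S, ‖f n x‖) ≤ ∫ x in S, K n * W x := by
      refine integral_mono_of_nonneg (Filter.Eventually.of_forall fun x => norm_nonneg _)
        (hWint n) ?_
      filter_upwards [ae_restrict_mem hSm] with x hx using hbound n x hx
    rw [integral_const_mul] at this
    calc (∫ x in S, ‖f n x‖) ≤ K n * ∫ x in S, W x := this
      _ = ‖c n‖ * r₀ ^ (-(n : ℤ)) * (M * r₀ ^ (-(k : ℤ)) * ∫ x in S, W x) := by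
          simp only [hKdef]; ring
  calc (∫ x in S, (((‖h (z x)‖ : ℝ) : ℂ)) ^ 2 * (z x) ^ (-(k : ℤ)) * w s x)
      = ∫ x in S, ∑' n : ℕ, f n x := setIntegral_congr_fun hSm hEq
    _ = ∑' n : ℕ, ∫ x in S, f n x :=
        (integral_tsum_of_summable_integral_norm hint hsumint).symm
    _ = ∑' n : ℕ, c n * ∫ x in S,
          (starRingEnd ℂ) (h (z x)) * (z x) ^ (-(n : ℤ) - (k : ℤ)) * w s x :=
        tsum_congr fun n => by rw [hfdef]; exact integral_const_mul (c n) _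
end

section
/- Let r₀ > 0, k ∈ ℕ, and let w : [r₀,∞) → ℂ be twice continuously differentiable. Define Δ_k w(s) = (1/s) d/ds ( s w'(s) ) − (k²/s²) w(s). Assume the functions s ↦ s^{-k+1} Δ_k w(s), s ↦ s^{-k} w'(s) and s ↦ s^{-k-1} w(s) are integrable on (r₀,∞), and that s^{-k+1} w'(s) → 0 and s^{-k} w(s) → 0 as s → ∞. Then ∫_{r₀}^∞ s^{-k+1} Δ_k w(s) ds = − r₀^{-k} ( r₀ w'(r₀) + k w(r₀) ). -/
open MeasureTheory Set Complex Filter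

/-- integration by parts against the mode-`k` Laplacian. For a twice
continuously differentiable `w` on `[r₀,∞)` with integrable weighted derivatives and the
stated decay at infinity,
`∫_{r₀}^∞ s^{-k+1} Δ_k w(s) ds = − r₀^{-k} ( r₀ w'(r₀) + k w(r₀) )`,
where `Δ_k w(s) = (1/s)(s w'(s))' − (k²/s²) w(s)`. -/
theorem stmt12 (r₀ : ℝ) (hr₀ : 0 < r₀) (k : ℕ) (w w' : ℝ → ℂ)
    (hw' : ∀ s ∈ Set.Ici r₀, HasDerivWithinAt w (w' s) (Set.Ici r₀) s)
    (hw'smooth : ContDiffOn ℝ 1 w' (Set.Ici r₀))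
    (Δkw : ℝ → ℂ)
    (hΔ : ∀ s ∈ Set.Ici r₀, Δkw s =
      (1 / (s : ℂ)) * derivWithin (fun σ : ℝ => (σ : ℂ) * w' σ) (Set.Ici r₀) s
        - ((k : ℂ) ^ 2 / (s : ℂ) ^ 2) * w s)
    (hint1 : IntegrableOn (fun s : ℝ => (s : ℂ) ^ (-(k : ℤ) + 1) * Δkw s) (Set.Ioi r₀))
    (hint2 : IntegrableOn (fun s : ℝ => (s : ℂ) ^ (-(k : ℤ)) * w' s) (Set.Ioi r₀))
    (hint3 : IntegrableOn (fun s : ℝ => (s : ℂ) ^ (-(k : ℤ) - 1) * w s) (Set.Ioi r₀))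
    (hlim1 : Tendsto (fun s : ℝ => (s : ℂ) ^ (-(k : ℤ) + 1) * w' s) atTop (nhds 0))
    (hlim2 : Tendsto (fun s : ℝ => (s : ℂ) ^ (-(k : ℤ)) * w s) atTop (nhds 0)) :
    (∫ s in Set.Ioi r₀, (s : ℂ) ^ (-(k : ℤ) + 1) * Δkw s) =
      -(r₀ : ℂ) ^ (-(k : ℤ)) * ((r₀ : ℂ) * w' r₀ + (k : ℂ) * w r₀) := by
  set m : ℤ := -(k : ℤ) with hm
  set g : ℝ → ℂ := fun σ : ℝ => (σ : ℂ) * w' σ with hg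
  set g' : ℝ → ℂ := fun s => derivWithin g (Set.Ici r₀) s with hg'
  set F : ℝ → ℂ := fun s => (s : ℂ) ^ m * g s + (k : ℂ) * ((s : ℂ) ^ m * w s) with hF
  -- g differentiable within Ici
  have hgdiff : ∀ s ∈ Set.Ici r₀, HasDerivWithinAt g (g' s) (Set.Ici r₀) s := by
    intro s hs
    have h1 : DifferentiableWithinAt ℝ g (Set.Ici r₀) s := by
      apply DifferentiableWithinAt.mul
      · exact (Complex.ofRealCLM.differentiable.differentiableAt).differentiableWithinAt
      · exact (hw'smooth.differentiableOn one_ne_zero) s hs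
    exact h1.hasDerivWithinAt
  -- F has derivative within Ici
  have hFderiv : ∀ s ∈ Set.Ici r₀, HasDerivWithinAt F ((s : ℂ) ^ (m + 1) * Δkw s)
      (Set.Ici r₀) s := by
    intro s hs
    have hspos : 0 < s := lt_of_lt_of_le hr₀ hs
    have hsne : (s : ℂ) ≠ 0 := by exact_mod_cast hspos.ne'
    have hz : HasDerivWithinAt (fun y : ℝ => (y : ℂ) ^ m) ((m : ℂ) * (s : ℂ) ^ (m - 1))
        (Set.Ici r₀) s :=
      ((hasDerivAt_zpow m (s : ℂ) (Or.inl hsne)).comp_ofReal).hasDerivWithinAt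
    have hd : HasDerivWithinAt F
        (((m : ℂ) * (s : ℂ) ^ (m - 1) * g s + (s : ℂ) ^ m * g' s)
          + (k : ℂ) * ((m : ℂ) * (s : ℂ) ^ (m - 1) * w s + (s : ℂ) ^ m * w' s))
        (Set.Ici r₀) s := by
      exact (hz.mul (hgdiff s hs)).add (((hz.mul (hw' s hs))).const_mul (k : ℂ))
    convert hd using 1
    rw [hΔ s hs]
    have e1 : (s : ℂ) ^ m = (s : ℂ) ^ (m - 1) * (s : ℂ) := by
      rw [← zpow_add_one₀ hsne]; ring_nf
    have e2 : (s : ℂ) ^ (m + 1) = (s : ℂ) ^ (m - 1) * (s : ℂ) ^ 2 := by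
      rw [show m + 1 = (m - 1) + 2 by ring, zpow_add₀ hsne]; norm_cast
    have hmc : (m : ℂ) = -(k : ℂ) := by push_cast [hm]; ring
    rw [e1, e2, hmc, hg]
    have hs2 : ((s : ℂ)) ^ 2 ≠ 0 := pow_ne_zero _ hsne
    field_simp
    ring
  -- continuity of F at r₀ within Ici
  have hFcont : ContinuousWithinAt F (Set.Ici r₀) r₀ :=
    (hFderiv r₀ self_mem_Ici).continuousWithinAt
  -- HasDerivAt on Ioi
  have hFderivAt : ∀ s ∈ Set.Ioi r₀, HasDerivAt F ((s : ℂ) ^ (m + 1) * Δkw s) s := by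
    intro s hs
    exact (hFderiv s (Set.Ioi_subset_Ici_self hs)).hasDerivAt (Ici_mem_nhds hs)
  -- limit of F at ∞
  have hFlim : Tendsto F atTop (nhds 0) := by
    have : Tendsto (fun s : ℝ => (s : ℂ) ^ (m + 1) * w' s + (k : ℂ) * ((s : ℂ) ^ m * w s))
        atTop (nhds (0 + (k : ℂ) * 0)) :=
      hlim1.add (hlim2.const_mul _)
    rw [show (0 : ℂ) + (k : ℂ) * 0 = 0 by ring] at this
    apply this.congr'
    filter_upwards [eventually_gt_atTop (0 : ℝ)] with s hs
    have hsne : (s : ℂ) ≠ 0 := by exact_mod_cast hs.ne'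
    simp only [hF, hg, zpow_add_one₀ hsne]
    ring
  have key := integral_Ioi_of_hasDerivAt_of_tendsto hFcont hFderivAt hint1 hFlim
  rw [key]
  simp only [hF]
  have hr0ne : (r₀ : ℂ) ≠ 0 := by exact_mod_cast hr₀.ne'
  simp only [hg]
  ring
end

section
/- Let 0 < r₁ < r₂, let w : {x ∈ ℝ² : r₁ < |x| < r₂} → ℂ be continuously differentiable, let v∞ = (v∞x, v∞y) ∈ ℝ², and set a = ½(v∞x − i v∞y), b = ½(v∞x + i v∞y). For m ∈ ℤ and r ∈ (r₁,r₂) let w_m(r) = (1/(2π)) ∫₀^{2π} w(r cos φ, r sin φ) e^{-imφ} dφ. Then for every k ∈ ℤ and r ∈ (r₁,r₂), the k-th angular Fourier coefficient of the function x ↦ v∞x ∂₁w(x) + v∞y ∂₂w(x) at radius r equals a w_{k-1}'(r) + b w_{k+1}'(r) − ((k−1)a/r) w_{k-1}(r) + ((k+1)b/r) w_{k+1}(r). -/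
open MeasureTheory Set Complex Real

/-- The `k`-th angular Fourier coefficient of a function `u` on the plane, at radius `s`. -/
noncomputable def angCoeff (u : ℝ × ℝ → ℂ) (k : ℤ) (s : ℝ) : ℂ :=
  (1 / (2 * Real.pi)) *
    ∫ φ in (0 : ℝ)..(2 * Real.pi),
      u (s * Real.cos φ, s * Real.sin φ) * Complex.exp (-Complex.I * k * φ)

lemma enorm2_pt (ρ φ : ℝ) (hρ : 0 ≤ ρ) :
    enorm2 (ρ * Real.cos φ, ρ * Real.sin φ) = ρ := by
  have h : (ρ * Real.cos φ) ^ 2 + (ρ * Real.sin φ) ^ 2 = ρ ^ 2 := by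
    have := Real.sin_sq_add_cos_sq φ; nlinarith
  simp only [enorm2]; rw [h, Real.sqrt_sq hρ]



lemma continuous_enorm2 : Continuous enorm2 := by
  unfold enorm2
  exact (((continuous_fst.pow 2).add (continuous_snd.pow 2))).sqrt



lemma isOpen_ann (r₁ r₂ : ℝ) :
    IsOpen {x : ℝ × ℝ | r₁ < enorm2 x ∧ enorm2 x < r₂} := by
  have : {x : ℝ × ℝ | r₁ < enorm2 x ∧ enorm2 x < r₂} = enorm2 ⁻¹' (Set.Ioo r₁ r₂) := rfl
  rw [this]; exact isOpen_Ioo.preimage continuous_enorm2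



lemma norm_exp_eq_one (m : ℤ) (φ : ℝ) : ‖Complex.exp (-Complex.I * m * φ)‖ = 1 := by
  rw [Complex.norm_exp]
  simp



lemma hasDerivAt_angCoeff (r₁ r₂ : ℝ) (hr₁ : 0 < r₁) (w : ℝ × ℝ → ℂ)
    (hw : ContDiffOn ℝ 1 w {x : ℝ × ℝ | r₁ < enorm2 x ∧ enorm2 x < r₂})
    (m : ℤ) (r : ℝ) (hr : r ∈ Set.Ioo r₁ r₂) :
    HasDerivAt (fun ρ => angCoeff w m ρ)
      ((1 / (2 * Real.pi)) * ∫ φ in (0:ℝ)..(2 * Real.pi),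
        (fderiv ℝ w (r * Real.cos φ, r * Real.sin φ)) (Real.cos φ, Real.sin φ)
          * Complex.exp (-Complex.I * m * φ)) r := by
  obtain ⟨hrl, hrr⟩ := hr
  set U := {x : ℝ × ℝ | r₁ < enorm2 x ∧ enorm2 x < r₂} with hUdef
  have hU : IsOpen U := isOpen_ann r₁ r₂
  have hcw : ContinuousOn w U := hw.continuousOn
  have hdf : ContinuousOn (fderiv ℝ w) U := hw.continuousOn_fderiv_of_isOpen hU le_rfl
  set ε := min (r - r₁) (r₂ - r) / 2 with hεdef
  have hε : 0 < ε := by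
    have h1 : 0 < r - r₁ := by linarith
    have h2 : 0 < r₂ - r := by linarith
    positivity
  have hmin1 : min (r - r₁) (r₂ - r) ≤ r - r₁ := min_le_left _ _
  have hmin2 : min (r - r₁) (r₂ - r) ≤ r₂ - r := min_le_right _ _
  have hεl : r₁ < r - ε := by rw [hεdef]; linarith
  have hεr : r + ε < r₂ := by rw [hεdef]; linarith
  have hball : ∀ ρ ∈ Metric.ball r ε, ρ ∈ Set.Ioo r₁ r₂ := by
    intro ρ hρ
    rw [Metric.mem_ball, Real.dist_eq] at hρ
    have := abs_lt.mp hρ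
    constructor <;> [linarith; linarith]
  have hρpos : ∀ ρ ∈ Set.Ioo r₁ r₂, (0:ℝ) ≤ ρ := fun ρ hρ => le_of_lt (lt_trans hr₁ hρ.1)
  have hmemU : ∀ ρ ∈ Set.Ioo r₁ r₂, ∀ φ : ℝ, (ρ * Real.cos φ, ρ * Real.sin φ) ∈ U := by
    intro ρ hρ φ
    constructor <;> rw [enorm2_pt ρ φ (hρpos ρ hρ)]
    exacts [hρ.1, hρ.2]
  -- compact set and bound
  set K := enorm2 ⁻¹' Set.Icc (r - ε) (r + ε) with hKdef
  have hKU : K ⊆ U := by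
    intro x hx
    obtain ⟨h1, h2⟩ := hx
    exact ⟨lt_of_lt_of_le hεl h1, lt_of_le_of_lt h2 hεr⟩
  have hKclosed : IsClosed K := isClosed_Icc.preimage continuous_enorm2
  have hKsub : K ⊆ Metric.closedBall (0 : ℝ × ℝ) (r + ε) := by
    intro x hx
    rw [Metric.mem_closedBall, dist_zero_right]
    have h1 : ‖x‖ ≤ enorm2 x := by
      rw [Prod.norm_def]
      apply max_le
      · rw [Real.norm_eq_abs, ← Real.sqrt_sq_eq_abs]
        exact Real.sqrt_le_sqrt (by nlinarith [sq_nonneg x.2])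
      · rw [Real.norm_eq_abs, ← Real.sqrt_sq_eq_abs]
        exact Real.sqrt_le_sqrt (by nlinarith [sq_nonneg x.1])
    exact le_trans h1 hx.2
  have hK : IsCompact K :=
    (isCompact_closedBall (0 : ℝ × ℝ) (r + ε)).of_isClosed_subset hKclosed hKsub
  obtain ⟨C, hC⟩ := hK.exists_bound_of_continuousOn (hdf.mono hKU)
  -- continuity facts
  have hexp : ∀ m : ℤ, Continuous fun φ : ℝ => Complex.exp (-Complex.I * m * φ) := by
    intro m
    exact Complex.continuous_exp.comp (continuous_const.mul Complex.continuous_ofReal)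
  have hcg : ∀ ρ ∈ Set.Ioo r₁ r₂, Continuous fun φ : ℝ => w (ρ * Real.cos φ, ρ * Real.sin φ) := by
    intro ρ hρ
    exact hcw.comp_continuous ((continuous_const.mul Real.continuous_cos).prodMk (continuous_const.mul Real.continuous_sin)) (hmemU ρ hρ)
  have hcL : Continuous fun φ : ℝ => fderiv ℝ w (r * Real.cos φ, r * Real.sin φ) :=
    hdf.comp_continuous ((continuous_const.mul Real.continuous_cos).prodMk (continuous_const.mul Real.continuous_sin)) (hmemU r ⟨hrl, hrr⟩)
  have hcF' : Continuous fun φ : ℝ =>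
      (fderiv ℝ w (r * Real.cos φ, r * Real.sin φ)) (Real.cos φ, Real.sin φ)
        * Complex.exp (-Complex.I * m * φ) := by
    exact (hcL.clm_apply (Real.continuous_cos.prodMk Real.continuous_sin)).mul (hexp m)
  -- the dominated derivative theorem
  have key := intervalIntegral.hasDerivAt_integral_of_dominated_loc_of_deriv_le
    (F := fun ρ φ => w (ρ * Real.cos φ, ρ * Real.sin φ) * Complex.exp (-Complex.I * m * φ))
    (F' := fun ρ φ => (fderiv ℝ w (ρ * Real.cos φ, ρ * Real.sin φ)) (Real.cos φ, Real.sin φ)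
        * Complex.exp (-Complex.I * m * φ))
    (μ := volume) (a := (0:ℝ)) (b := 2 * Real.pi) (x₀ := r)
    (bound := fun _ => C) (s := Metric.ball r ε) (Metric.ball_mem_nhds r hε)
    (by
      filter_upwards [Metric.ball_mem_nhds r hε] with ρ hρ
      exact ((hcg ρ (hball ρ hρ)).mul (hexp m)).aestronglyMeasurable)
    (((hcg r ⟨hrl, hrr⟩).mul (hexp m)).intervalIntegrable 0 (2 * Real.pi))
    hcF'.aestronglyMeasurable
    (by
      apply ae_of_all
      intro φ _ ρ hρ
      have hρ' := hball ρ hρ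
      have hmemK : (ρ * Real.cos φ, ρ * Real.sin φ) ∈ K := by
        rw [hKdef, Set.mem_preimage, enorm2_pt ρ φ (hρpos ρ hρ')]
        rw [Metric.mem_ball, Real.dist_eq] at hρ
        have := abs_lt.mp hρ
        exact ⟨by linarith, by linarith⟩
      rw [norm_mul, norm_exp_eq_one, mul_one]
      calc ‖(fderiv ℝ w (ρ * Real.cos φ, ρ * Real.sin φ)) (Real.cos φ, Real.sin φ)‖
          ≤ ‖fderiv ℝ w (ρ * Real.cos φ, ρ * Real.sin φ)‖ * ‖((Real.cos φ, Real.sin φ) : ℝ × ℝ)‖ :=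
            ContinuousLinearMap.le_opNorm _ _
        _ ≤ C * 1 := by
            apply mul_le_mul (hC _ hmemK) _ (norm_nonneg _)
              (le_trans (norm_nonneg _) (hC _ hmemK))
            rw [Prod.norm_def]
            exact max_le (by rw [Real.norm_eq_abs]; exact Real.abs_cos_le_one φ)
              (by rw [Real.norm_eq_abs]; exact Real.abs_sin_le_one φ)
        _ = C := mul_one C)
    (intervalIntegrable_const)
    (by
      apply ae_of_all
      intro φ _ ρ hρ
      have hρ' := hball ρ hρ
      have hd : HasFDerivAt w (fderiv ℝ w (ρ * Real.cos φ, ρ * Real.sin φ))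
          (ρ * Real.cos φ, ρ * Real.sin φ) :=
        ((hw.differentiableOn one_ne_zero).differentiableAt
          (hU.mem_nhds (hmemU ρ hρ' φ))).hasFDerivAt
      have hq : HasDerivAt (fun ρ : ℝ => (ρ * Real.cos φ, ρ * Real.sin φ))
          (Real.cos φ, Real.sin φ) ρ :=
        HasDerivAt.prodMk (hasDerivAt_mul_const (Real.cos φ)) (hasDerivAt_mul_const (Real.sin φ))
      exact (hd.comp_hasDerivAt ρ hq).mul_const _)
  exact key.2.const_mul _


lemma hasDerivAt_cexp_lin (c : ℂ) (φ : ℝ) :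
    HasDerivAt (fun φ : ℝ => Complex.exp (c * φ)) (c * Complex.exp (c * φ)) φ := by
  have h1 : HasDerivAt (fun φ : ℝ => (φ : ℂ)) 1 φ := by
    simpa using (hasDerivAt_id φ).ofReal_comp
  have := (h1.const_mul c).cexp
  simpa [mul_comm] using this



lemma int_by_parts (r₁ r₂ : ℝ) (hr₁ : 0 < r₁) (w : ℝ × ℝ → ℂ)
    (hw : ContDiffOn ℝ 1 w {x : ℝ × ℝ | r₁ < enorm2 x ∧ enorm2 x < r₂})
    (m : ℤ) (r : ℝ) (hr : r ∈ Set.Ioo r₁ r₂) :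
    ∫ φ in (0:ℝ)..(2 * Real.pi),
        (fderiv ℝ w (r * Real.cos φ, r * Real.sin φ)) (-(r * Real.sin φ), r * Real.cos φ)
          * Complex.exp (-Complex.I * m * φ)
      = (Complex.I * m) * ∫ φ in (0:ℝ)..(2 * Real.pi),
          w (r * Real.cos φ, r * Real.sin φ) * Complex.exp (-Complex.I * m * φ) := by
  set U := {x : ℝ × ℝ | r₁ < enorm2 x ∧ enorm2 x < r₂} with hUdef
  have hU : IsOpen U := isOpen_ann r₁ r₂
  have hrpos : (0:ℝ) ≤ r := le_of_lt (lt_trans hr₁ hr.1)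
  have hmemU : ∀ φ : ℝ, (r * Real.cos φ, r * Real.sin φ) ∈ U := by
    intro φ
    refine ⟨?_, ?_⟩ <;> rw [enorm2_pt r φ hrpos]
    exacts [hr.1, hr.2]
  have hcw : ContinuousOn w U := hw.continuousOn
  have hdf : ContinuousOn (fderiv ℝ w) U := hw.continuousOn_fderiv_of_isOpen hU le_rfl
  have pm : Continuous fun φ : ℝ => (r * Real.cos φ, r * Real.sin φ) :=
    (continuous_const.mul Real.continuous_cos).prodMk (continuous_const.mul Real.continuous_sin)
  have hexp : Continuous fun φ : ℝ => Complex.exp (-Complex.I * m * φ) :=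
    Complex.continuous_exp.comp (continuous_const.mul Complex.continuous_ofReal)
  have hcg : Continuous fun φ : ℝ => w (r * Real.cos φ, r * Real.sin φ) :=
    hcw.comp_continuous pm hmemU
  have hcL : Continuous fun φ : ℝ =>
      (fderiv ℝ w (r * Real.cos φ, r * Real.sin φ)) (-(r * Real.sin φ), r * Real.cos φ) :=
    (hdf.comp_continuous pm hmemU).clm_apply
      (((continuous_const.mul Real.continuous_sin).neg).prodMk
        (continuous_const.mul Real.continuous_cos))
  -- derivative of the product
  have hG : ∀ φ : ℝ, HasDerivAt
      (fun φ => w (r * Real.cos φ, r * Real.sin φ) * Complex.exp (-Complex.I * m * φ))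
      ((fderiv ℝ w (r * Real.cos φ, r * Real.sin φ)) (-(r * Real.sin φ), r * Real.cos φ)
          * Complex.exp (-Complex.I * m * φ)
        + w (r * Real.cos φ, r * Real.sin φ)
          * ((-Complex.I * m) * Complex.exp (-Complex.I * m * φ))) φ := by
    intro φ
    have hd : HasFDerivAt w (fderiv ℝ w (r * Real.cos φ, r * Real.sin φ))
        (r * Real.cos φ, r * Real.sin φ) :=
      ((hw.differentiableOn one_ne_zero).differentiableAt (hU.mem_nhds (hmemU φ))).hasFDerivAt
    have hq : HasDerivAt (fun φ : ℝ => (r * Real.cos φ, r * Real.sin φ))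
        (-(r * Real.sin φ), r * Real.cos φ) φ := by
      have h1 : HasDerivAt (fun φ : ℝ => r * Real.cos φ) (-(r * Real.sin φ)) φ := by
        simpa [mul_comm, neg_mul, mul_neg] using (Real.hasDerivAt_cos φ).const_mul r
      exact HasDerivAt.prodMk h1 ((Real.hasDerivAt_sin φ).const_mul r)
    have he : HasDerivAt (fun φ : ℝ => Complex.exp (-Complex.I * m * φ))
        ((-Complex.I * m) * Complex.exp (-Complex.I * m * φ)) φ :=
      hasDerivAt_cexp_lin _ φ
    exact (hd.comp_hasDerivAt φ hq).mul he
  -- integrate the derivative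
  have hint : ∫ φ in (0:ℝ)..(2 * Real.pi),
      ((fderiv ℝ w (r * Real.cos φ, r * Real.sin φ)) (-(r * Real.sin φ), r * Real.cos φ)
          * Complex.exp (-Complex.I * m * φ)
        + w (r * Real.cos φ, r * Real.sin φ)
          * ((-Complex.I * m) * Complex.exp (-Complex.I * m * φ)))
      = 0 := by
    rw [intervalIntegral.integral_eq_sub_of_hasDerivAt (fun φ _ => hG φ)
      (((hcL.mul hexp).add (hcg.mul (continuous_const.mul hexp))).intervalIntegrable 0 (2*Real.pi))]
    have h2π : Complex.exp (-(Complex.I * (m:ℂ) * (2 * (Real.pi:ℂ)))) = 1 := by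
      have he : (-(Complex.I * (m:ℂ) * (2 * (Real.pi:ℂ)))) = ((-m : ℤ) : ℂ) * (2 * (Real.pi:ℂ) * Complex.I) := by
        push_cast; ring
      rw [he, Complex.exp_int_mul_two_pi_mul_I]
    simp [Real.cos_two_pi, Real.sin_two_pi, h2π]
  have hsplit : (∫ φ in (0:ℝ)..(2 * Real.pi),
      ((fderiv ℝ w (r * Real.cos φ, r * Real.sin φ)) (-(r * Real.sin φ), r * Real.cos φ)
          * Complex.exp (-Complex.I * m * φ)
        + w (r * Real.cos φ, r * Real.sin φ)
          * ((-Complex.I * m) * Complex.exp (-Complex.I * m * φ))))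
      = (∫ φ in (0:ℝ)..(2 * Real.pi),
          (fderiv ℝ w (r * Real.cos φ, r * Real.sin φ)) (-(r * Real.sin φ), r * Real.cos φ)
            * Complex.exp (-Complex.I * m * φ))
        + ∫ φ in (0:ℝ)..(2 * Real.pi),
            w (r * Real.cos φ, r * Real.sin φ)
              * ((-Complex.I * m) * Complex.exp (-Complex.I * m * φ)) :=
    intervalIntegral.integral_add
      ((hcL.mul hexp).intervalIntegrable 0 (2*Real.pi))
      ((hcg.mul (continuous_const.mul hexp)).intervalIntegrable 0 (2*Real.pi))
  rw [hsplit] at hint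
  have h2 : ∫ φ in (0:ℝ)..(2 * Real.pi),
      w (r * Real.cos φ, r * Real.sin φ) * ((-Complex.I * m) * Complex.exp (-Complex.I * m * φ))
      = (-Complex.I * m) * ∫ φ in (0:ℝ)..(2 * Real.pi),
          w (r * Real.cos φ, r * Real.sin φ) * Complex.exp (-Complex.I * m * φ) := by
    rw [← intervalIntegral.integral_const_mul]
    congr 1; ext φ; ring
  rw [h2] at hint
  linear_combination hint


lemma keyAlg (vx vy c s r : ℝ) (hr : (r : ℂ) ≠ 0) (X Y Ek a b : ℂ)
    (ha : a = ((vx : ℂ) - Complex.I * vy) / 2)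
    (hb : b = ((vx : ℂ) + Complex.I * vy) / 2)
    (hcs : (c : ℂ) ^ 2 + (s : ℂ) ^ 2 = 1) :
    ((vx : ℂ) * X + (vy : ℂ) * Y) * Ek =
      a * ((c : ℂ) * X + (s : ℂ) * Y) * (Ek * ((c : ℂ) + (s : ℂ) * Complex.I))
      + b * ((c : ℂ) * X + (s : ℂ) * Y) * (Ek * ((c : ℂ) - (s : ℂ) * Complex.I))
      + (Complex.I * a / r) * ((-((r : ℂ) * s)) * X + ((r : ℂ) * c) * Y) *
          (Ek * ((c : ℂ) + (s : ℂ) * Complex.I))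
      - (Complex.I * b / r) * ((-((r : ℂ) * s)) * X + ((r : ℂ) * c) * Y) *
          (Ek * ((c : ℂ) - (s : ℂ) * Complex.I)) := by
  subst ha hb
  field_simp
  linear_combination (-(8:ℂ) * (r:ℂ)^2 * Ek * ((vx:ℂ)*X + (vy:ℂ)*Y)) * hcs + ((8:ℂ) * (r:ℂ)^2 * Ek * ((vx:ℂ)*X*(s:ℂ)^2 - (vx:ℂ)*Y*(c:ℂ)*(s:ℂ) + (vy:ℂ)*Y*((c:ℂ)^2+(s:ℂ)^2))) * Complex.I_sq + (Ek*((8*(r:ℂ)^2-2)*(vx:ℂ)*X - (8*(r:ℂ)^2-2)*(vy:ℂ)*Y)) * hcs + (Ek*((2-8*(r:ℂ)^2)*(s:ℂ)^2*(vx:ℂ)*X + (8*(r:ℂ)^2-2)*(s:ℂ)*(c:ℂ)*(vx:ℂ)*Y + (2-8*(r:ℂ)^2)*((s:ℂ)^2+(c:ℂ)^2)*(vy:ℂ)*Y)) * Complex.I_sq + (Ek*(16*(r:ℂ)^2-4)*(vy:ℂ)*Y) * hcs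

lemma clm_eval (L : ℝ × ℝ →L[ℝ] ℂ) (u v : ℝ) :
    L (u, v) = (u : ℂ) * L (1, 0) + (v : ℂ) * L (0, 1) := by
  have h : ((u, v) : ℝ × ℝ) = u • ((1, 0) : ℝ × ℝ) + v • ((0, 1) : ℝ × ℝ) := by
    simp [Prod.ext_iff]
  rw [h, L.map_add, L.map_smul, L.map_smul, Complex.real_smul, Complex.real_smul]

lemma finalAlg (a b A1 A2 W1 W2 p : ℂ) (k : ℤ) (r : ℝ) :
    p * (a * A1 + b * A2
      + (Complex.I * a / (r : ℂ)) * (Complex.I * (((k - 1 : ℤ)) : ℂ) * W1)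
      - (Complex.I * b / (r : ℂ)) * (Complex.I * (((k + 1 : ℤ)) : ℂ) * W2))
    = a * (p * A1) + b * (p * A2)
      - (((k : ℂ) - 1) * a / (r : ℂ)) * (p * W1)
      + (((k : ℂ) + 1) * b / (r : ℂ)) * (p * W2) := by
  push_cast
  linear_combination
    (p * (((k : ℂ) - 1) * a / (r : ℂ) * W1 - ((k : ℂ) + 1) * b / (r : ℂ) * W2)) * Complex.I_sq

lemma expShift_down (k : ℤ) (φ : ℝ) :
    Complex.exp (-Complex.I * ((k - 1 : ℤ) : ℂ) * (φ : ℂ))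
      = Complex.exp (-Complex.I * (k : ℂ) * (φ : ℂ))
        * ((Real.cos φ : ℂ) + (Real.sin φ : ℂ) * Complex.I) := by
  have h : ((Real.cos φ : ℂ) + (Real.sin φ : ℂ) * Complex.I) = Complex.exp ((φ : ℂ) * Complex.I) := by
    rw [Complex.exp_mul_I, Complex.ofReal_cos, Complex.ofReal_sin]
  rw [h, ← Complex.exp_add]
  congr 1
  push_cast
  ring

lemma expShift_up (k : ℤ) (φ : ℝ) :
    Complex.exp (-Complex.I * ((k + 1 : ℤ) : ℂ) * (φ : ℂ))
      = Complex.exp (-Complex.I * (k : ℂ) * (φ : ℂ))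
        * ((Real.cos φ : ℂ) - (Real.sin φ : ℂ) * Complex.I) := by
  have h : ((Real.cos φ : ℂ) - (Real.sin φ : ℂ) * Complex.I)
      = Complex.exp (-(φ : ℂ) * Complex.I) := by
    rw [Complex.exp_mul_I, Complex.cos_neg, Complex.sin_neg,
      Complex.ofReal_cos, Complex.ofReal_sin]
    ring
  rw [h, ← Complex.exp_add]
  congr 1
  push_cast
  ring

/-- Fourier coefficients of the Oseen convection term. For `w`
continuously differentiable on the annulus `r₁ < |x| < r₂`,
`a = ½(v∞x − i v∞y)`, `b = ½(v∞x + i v∞y)`, the `k`-th angular Fourier coefficient of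
`x ↦ v∞x ∂₁w(x) + v∞y ∂₂w(x)` at radius `r` equals
`a w_{k-1}'(r) + b w_{k+1}'(r) − ((k−1)a/r) w_{k-1}(r) + ((k+1)b/r) w_{k+1}(r)`. -/
theorem stmt17 (r₁ r₂ : ℝ) (hr₁ : 0 < r₁) (hr₁₂ : r₁ < r₂)
    (w : ℝ × ℝ → ℂ)
    (hw : ContDiffOn ℝ 1 w {x : ℝ × ℝ | r₁ < enorm2 x ∧ enorm2 x < r₂})
    (vx vy : ℝ) (a b : ℂ)
    (ha : a = ((vx : ℂ) - Complex.I * vy) / 2)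
    (hb : b = ((vx : ℂ) + Complex.I * vy) / 2) :
    ∀ k : ℤ, ∀ r ∈ Set.Ioo r₁ r₂,
      angCoeff (fun x : ℝ × ℝ =>
          (vx : ℂ) * fderiv ℝ w x (1, 0) + (vy : ℂ) * fderiv ℝ w x (0, 1)) k r =
        a * deriv (fun ρ => angCoeff w (k - 1) ρ) r
        + b * deriv (fun ρ => angCoeff w (k + 1) ρ) r
        - (((k : ℂ) - 1) * a / (r : ℂ)) * angCoeff w (k - 1) r
        + (((k : ℂ) + 1) * b / (r : ℂ)) * angCoeff w (k + 1) r := by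
  intro k r hr
  have hrpos : (0:ℝ) < r := lt_trans hr₁ hr.1
  have hrC : (r : ℂ) ≠ 0 := by exact_mod_cast ne_of_gt hrpos
  set U := {x : ℝ × ℝ | r₁ < enorm2 x ∧ enorm2 x < r₂} with hUdef
  have hU : IsOpen U := isOpen_ann r₁ r₂
  have hmemU : ∀ φ : ℝ, (r * Real.cos φ, r * Real.sin φ) ∈ U := by
    intro φ
    refine ⟨?_, ?_⟩ <;> rw [enorm2_pt r φ (le_of_lt hrpos)]
    exacts [hr.1, hr.2]
  have hdf : ContinuousOn (fderiv ℝ w) U := hw.continuousOn_fderiv_of_isOpen hU le_rfl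
  have pm : Continuous fun φ : ℝ => (r * Real.cos φ, r * Real.sin φ) :=
    (continuous_const.mul Real.continuous_cos).prodMk (continuous_const.mul Real.continuous_sin)
  have hcLmap : Continuous fun φ : ℝ => fderiv ℝ w (r * Real.cos φ, r * Real.sin φ) :=
    hdf.comp_continuous pm hmemU
  have hexp : ∀ m : ℤ, Continuous fun φ : ℝ => Complex.exp (-Complex.I * m * φ) := fun m =>
    Complex.continuous_exp.comp (continuous_const.mul Complex.continuous_ofReal)
  have hcA : Continuous fun φ : ℝ =>
      (fderiv ℝ w (r * Real.cos φ, r * Real.sin φ)) (Real.cos φ, Real.sin φ) :=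
    hcLmap.clm_apply (Real.continuous_cos.prodMk Real.continuous_sin)
  have hcB : Continuous fun φ : ℝ =>
      (fderiv ℝ w (r * Real.cos φ, r * Real.sin φ)) (-(r * Real.sin φ), r * Real.cos φ) :=
    hcLmap.clm_apply (((continuous_const.mul Real.continuous_sin).neg).prodMk
      (continuous_const.mul Real.continuous_cos))
  -- pointwise identity
  have hptwise : ∀ φ : ℝ,
      ((vx : ℂ) * (fderiv ℝ w (r * Real.cos φ, r * Real.sin φ)) (1, 0)
        + (vy : ℂ) * (fderiv ℝ w (r * Real.cos φ, r * Real.sin φ)) (0, 1))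
        * Complex.exp (-Complex.I * k * φ)
      = a * ((fderiv ℝ w (r * Real.cos φ, r * Real.sin φ)) (Real.cos φ, Real.sin φ)
            * Complex.exp (-Complex.I * ((k - 1 : ℤ)) * φ))
        + b * ((fderiv ℝ w (r * Real.cos φ, r * Real.sin φ)) (Real.cos φ, Real.sin φ)
            * Complex.exp (-Complex.I * ((k + 1 : ℤ)) * φ))
        + (Complex.I * a / (r : ℂ)) *
            ((fderiv ℝ w (r * Real.cos φ, r * Real.sin φ)) (-(r * Real.sin φ), r * Real.cos φ)
              * Complex.exp (-Complex.I * ((k - 1 : ℤ)) * φ))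
        - (Complex.I * b / (r : ℂ)) *
            ((fderiv ℝ w (r * Real.cos φ, r * Real.sin φ)) (-(r * Real.sin φ), r * Real.cos φ)
              * Complex.exp (-Complex.I * ((k + 1 : ℤ)) * φ)) := by
    intro φ
    have hcs : ((Real.cos φ : ℂ)) ^ 2 + ((Real.sin φ : ℂ)) ^ 2 = 1 := by
      norm_cast
      exact Real.cos_sq_add_sin_sq φ
    have hk := keyAlg vx vy (Real.cos φ) (Real.sin φ) r hrC
      ((fderiv ℝ w (r * Real.cos φ, r * Real.sin φ)) (1, 0))
      ((fderiv ℝ w (r * Real.cos φ, r * Real.sin φ)) (0, 1)) (Complex.exp (-Complex.I * k * φ))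
      a b ha hb hcs
    have e1 : (fderiv ℝ w (r * Real.cos φ, r * Real.sin φ)) (Real.cos φ, Real.sin φ)
        = ((Real.cos φ : ℂ)) * (fderiv ℝ w (r * Real.cos φ, r * Real.sin φ)) (1, 0)
          + ((Real.sin φ : ℂ)) * (fderiv ℝ w (r * Real.cos φ, r * Real.sin φ)) (0, 1) :=
      clm_eval _ _ _
    have e2 : (fderiv ℝ w (r * Real.cos φ, r * Real.sin φ)) (-(r * Real.sin φ), r * Real.cos φ)
        = ((-(r * Real.sin φ) : ℝ) : ℂ) * (fderiv ℝ w (r * Real.cos φ, r * Real.sin φ)) (1, 0)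
          + ((r * Real.cos φ : ℝ) : ℂ) * (fderiv ℝ w (r * Real.cos φ, r * Real.sin φ)) (0, 1) :=
      clm_eval _ _ _
    rw [expShift_down k φ, expShift_up k φ, e1, e2]
    push_cast
    push_cast at hk
    linear_combination hk
  -- rewrite the main integral
  have hIeq : (∫ φ in (0:ℝ)..(2 * Real.pi),
        ((vx : ℂ) * (fderiv ℝ w (r * Real.cos φ, r * Real.sin φ)) (1, 0)
          + (vy : ℂ) * (fderiv ℝ w (r * Real.cos φ, r * Real.sin φ)) (0, 1))
          * Complex.exp (-Complex.I * k * φ))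
      = a * (∫ φ in (0:ℝ)..(2 * Real.pi),
            (fderiv ℝ w (r * Real.cos φ, r * Real.sin φ)) (Real.cos φ, Real.sin φ)
              * Complex.exp (-Complex.I * ((k - 1 : ℤ)) * φ))
        + b * (∫ φ in (0:ℝ)..(2 * Real.pi),
            (fderiv ℝ w (r * Real.cos φ, r * Real.sin φ)) (Real.cos φ, Real.sin φ)
              * Complex.exp (-Complex.I * ((k + 1 : ℤ)) * φ))
        + (Complex.I * a / (r : ℂ)) * (∫ φ in (0:ℝ)..(2 * Real.pi),
            (fderiv ℝ w (r * Real.cos φ, r * Real.sin φ)) (-(r * Real.sin φ), r * Real.cos φ)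
              * Complex.exp (-Complex.I * ((k - 1 : ℤ)) * φ))
        - (Complex.I * b / (r : ℂ)) * (∫ φ in (0:ℝ)..(2 * Real.pi),
            (fderiv ℝ w (r * Real.cos φ, r * Real.sin φ)) (-(r * Real.sin φ), r * Real.cos φ)
              * Complex.exp (-Complex.I * ((k + 1 : ℤ)) * φ)) := by
    rw [intervalIntegral.integral_congr (g := fun φ =>
      a * ((fderiv ℝ w (r * Real.cos φ, r * Real.sin φ)) (Real.cos φ, Real.sin φ)
            * Complex.exp (-Complex.I * ((k - 1 : ℤ)) * φ))
        + b * ((fderiv ℝ w (r * Real.cos φ, r * Real.sin φ)) (Real.cos φ, Real.sin φ)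
            * Complex.exp (-Complex.I * ((k + 1 : ℤ)) * φ))
        + (Complex.I * a / (r : ℂ)) *
            ((fderiv ℝ w (r * Real.cos φ, r * Real.sin φ)) (-(r * Real.sin φ), r * Real.cos φ)
              * Complex.exp (-Complex.I * ((k - 1 : ℤ)) * φ))
        - (Complex.I * b / (r : ℂ)) *
            ((fderiv ℝ w (r * Real.cos φ, r * Real.sin φ)) (-(r * Real.sin φ), r * Real.cos φ)
              * Complex.exp (-Complex.I * ((k + 1 : ℤ)) * φ))) (fun φ _ => hptwise φ)]
    have i1 := ((continuous_const (y := a)).mul (hcA.mul (hexp (k-1)))).intervalIntegrable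
      (μ := volume) 0 (2*Real.pi)
    have i2 := ((continuous_const (y := b)).mul (hcA.mul (hexp (k+1)))).intervalIntegrable
      (μ := volume) 0 (2*Real.pi)
    have i3 := ((continuous_const (y := Complex.I * a / (r:ℂ))).mul
      (hcB.mul (hexp (k-1)))).intervalIntegrable (μ := volume) 0 (2*Real.pi)
    have i4 := ((continuous_const (y := Complex.I * b / (r:ℂ))).mul
      (hcB.mul (hexp (k+1)))).intervalIntegrable (μ := volume) 0 (2*Real.pi)
    rw [intervalIntegral.integral_sub (by exact (i1.add i2).add i3) (by exact i4),
      intervalIntegral.integral_add (by exact i1.add i2) (by exact i3),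
      intervalIntegral.integral_add (by exact i1) (by exact i2),
      intervalIntegral.integral_const_mul, intervalIntegral.integral_const_mul,
      intervalIntegral.integral_const_mul, intervalIntegral.integral_const_mul]
  -- derivatives of the Fourier coefficients
  have hd1 := (hasDerivAt_angCoeff r₁ r₂ hr₁ w hw (k - 1) r hr).deriv
  have hd2 := (hasDerivAt_angCoeff r₁ r₂ hr₁ w hw (k + 1) r hr).deriv
  have hb1 := int_by_parts r₁ r₂ hr₁ w hw (k - 1) r hr
  have hb2 := int_by_parts r₁ r₂ hr₁ w hw (k + 1) r hr
  have hLHS : angCoeff (fun x : ℝ × ℝ =>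
      (vx : ℂ) * fderiv ℝ w x (1, 0) + (vy : ℂ) * fderiv ℝ w x (0, 1)) k r
      = (1 / (2 * Real.pi)) * ∫ φ in (0:ℝ)..(2 * Real.pi),
          ((vx : ℂ) * (fderiv ℝ w (r * Real.cos φ, r * Real.sin φ)) (1, 0)
            + (vy : ℂ) * (fderiv ℝ w (r * Real.cos φ, r * Real.sin φ)) (0, 1))
            * Complex.exp (-Complex.I * k * φ) := rfl
  have hAC1 : angCoeff w (k - 1) r
      = (1 / (2 * Real.pi)) * ∫ φ in (0:ℝ)..(2 * Real.pi),
          w (r * Real.cos φ, r * Real.sin φ) * Complex.exp (-Complex.I * ((k - 1 : ℤ)) * φ) := rfl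
  have hAC2 : angCoeff w (k + 1) r
      = (1 / (2 * Real.pi)) * ∫ φ in (0:ℝ)..(2 * Real.pi),
          w (r * Real.cos φ, r * Real.sin φ) * Complex.exp (-Complex.I * ((k + 1 : ℤ)) * φ) := rfl
  rw [hLHS, hd1, hd2, hAC1, hAC2, hIeq, hb1, hb2]
  exact finalAlg a b _ _ _ _ _ k r
end
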